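/- Let d ≥ 1, N ∈ ℕ, and α, β ∈ ℝ with α + β > d, α < d, and β < d. Then there exists C = C(d, α, β) > 0, independent of N, such that uniformly over n ∈ (N^{-1}ℤ)^d: (1/N^d) · Σ_{n₁ + n₂ = n, n₁,n₂ ∈ (N^{-1}ℤ)^d} ⟨n₁⟩^{−α} ⟨n₂⟩^{−β} ≤ C ⟨n⟩^{−(α+β−d)}, where ⟨m⟩ = sqrt(η + 4π²|m|²) for a fixed η > 0. -/

import Mathlib

set_option maxHeartbeats 1600000

noncomputable def dcbJ (d : ℕ) (η : ℝ) (N : ℕ) (m : Fin d → ℤ) : ℝ :=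
  Real.sqrt (η + 4 * Real.pi ^ 2 * ∑ i, ((m i : ℝ) / N) ^ 2)

noncomputable def dcbS (d : ℕ) (N : ℕ) (m : Fin d → ℤ) : ℝ := ∑ i, ((m i : ℝ) / N) ^ 2

def dcbK (d : ℕ) (m : Fin d → ℤ) : ℕ := Finset.univ.sup fun i => (m i).natAbs

lemma dcbS_nonneg (d N : ℕ) (m : Fin d → ℤ) : 0 ≤ dcbS d N m := by
  unfold dcbS; positivity

lemma dcbJ_eq (d : ℕ) (η : ℝ) (N : ℕ) (m : Fin d → ℤ) :
    dcbJ d η N m = Real.sqrt (η + 4 * Real.pi ^ 2 * dcbS d N m) := rfl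

lemma dcbJ_sq (d : ℕ) (η : ℝ) (hη : 0 < η) (N : ℕ) (m : Fin d → ℤ) :
    dcbJ d η N m ^ 2 = η + 4 * Real.pi ^ 2 * dcbS d N m := by
  rw [dcbJ_eq, Real.sq_sqrt]
  have := dcbS_nonneg d N m
  positivity

lemma dcb_sqrt_eta_le (d : ℕ) (η : ℝ) (hη : 0 ≤ η) (N : ℕ) (m : Fin d → ℤ) :
    Real.sqrt η ≤ dcbJ d η N m := by
  rw [dcbJ_eq]
  apply Real.sqrt_le_sqrt
  have := dcbS_nonneg d N m
  nlinarith [sq_nonneg Real.pi]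

lemma dcbJ_pos (d : ℕ) (η : ℝ) (hη : 0 < η) (N : ℕ) (m : Fin d → ℤ) :
    0 < dcbJ d η N m :=
  lt_of_lt_of_le (Real.sqrt_pos.2 hη) (dcb_sqrt_eta_le d η hη.le N m)

lemma dcbJ_mono (d : ℕ) (η : ℝ) (N : ℕ) {m₁ m₂ : Fin d → ℤ}
    (h : dcbS d N m₁ ≤ dcbS d N m₂) : dcbJ d η N m₁ ≤ dcbJ d η N m₂ := by
  rw [dcbJ_eq, dcbJ_eq]
  apply Real.sqrt_le_sqrt
  nlinarith [sq_nonneg Real.pi]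

lemma dcbS_lower (d : ℕ) (hd : 1 ≤ d) (N : ℕ) (m : Fin d → ℤ) :
    ((dcbK d m : ℝ) / N) ^ 2 ≤ dcbS d N m := by
  have hne : (Finset.univ : Finset (Fin d)).Nonempty := by
    rw [Finset.univ_nonempty_iff]; exact Fin.pos_iff_nonempty.mp (by omega)
  obtain ⟨i, -, hi⟩ := Finset.exists_mem_eq_sup Finset.univ hne fun i => (m i).natAbs
  have : ((dcbK d m : ℝ) / N) ^ 2 = ((m i : ℝ) / N) ^ 2 := by
    rw [dcbK, hi]
    rw [div_pow, div_pow]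
    congr 1
    push_cast [Nat.cast_natAbs]
    rw [sq_abs]
  rw [this]
  exact Finset.single_le_sum (f := fun i => ((m i : ℝ) / N) ^ 2)
    (fun j _ => by positivity) (Finset.mem_univ i)

lemma dcbS_upper (d : ℕ) (N : ℕ) (m : Fin d → ℤ) :
    dcbS d N m ≤ d * ((dcbK d m : ℝ) / N) ^ 2 := by
  have h : ∀ i : Fin d, ((m i : ℝ) / N) ^ 2 ≤ ((dcbK d m : ℝ) / N) ^ 2 := by
    intro i
    have h1 : (m i).natAbs ≤ dcbK d m := Finset.le_sup (f := fun i => (m i).natAbs) (Finset.mem_univ i)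
    have h2 : |(m i : ℝ)| ≤ (dcbK d m : ℝ) := by
      have h2' : ((m i).natAbs : ℝ) ≤ (dcbK d m : ℝ) := by exact_mod_cast h1
      rwa [Nat.cast_natAbs, Int.cast_abs] at h2'
    have h3 : ((m i:ℝ))^2 ≤ (dcbK d m : ℝ)^2 := by nlinarith [abs_nonneg (m i : ℝ), sq_abs (m i : ℝ)]
    rw [div_pow, div_pow]
    gcongr
  calc dcbS d N m ≤ ∑ _i : Fin d, ((dcbK d m : ℝ) / N) ^ 2 := Finset.sum_le_sum fun i _ => h i
    _ = d * ((dcbK d m : ℝ) / N) ^ 2 := by simp [mul_comm]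

lemma dcb_twopiK_le_J (d : ℕ) (hd : 1 ≤ d) (η : ℝ) (hη : 0 < η) (N : ℕ) (m : Fin d → ℤ) :
    2 * Real.pi * ((dcbK d m : ℝ) / N) ≤ dcbJ d η N m := by
  have h1 := dcbS_lower d hd N m
  have h2 : (2 * Real.pi * ((dcbK d m : ℝ) / N)) ^ 2 ≤ dcbJ d η N m ^ 2 := by
    rw [dcbJ_sq d η hη N m]
    nlinarith [Real.pi_pos]
  have hx : 0 ≤ 2 * Real.pi * ((dcbK d m : ℝ) / N) := by positivity
  nlinarith [dcbJ_pos d η hη N m]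

lemma dcb_sqrt_add_le (a b : ℝ) (ha : 0 ≤ a) (hb : 0 ≤ b) :
    Real.sqrt (a + b) ≤ Real.sqrt a + Real.sqrt b := by
  have h : a + b ≤ (Real.sqrt a + Real.sqrt b) ^ 2 := by
    have := Real.sq_sqrt ha
    have := Real.sq_sqrt hb
    nlinarith [Real.sqrt_nonneg a, Real.sqrt_nonneg b]
  calc Real.sqrt (a + b) ≤ Real.sqrt ((Real.sqrt a + Real.sqrt b) ^ 2) := Real.sqrt_le_sqrt h
    _ = Real.sqrt a + Real.sqrt b := by
        rw [Real.sqrt_sq (by positivity)]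

lemma dcbJ_le (d : ℕ) (η : ℝ) (hη : 0 < η) (N : ℕ) (m : Fin d → ℤ) :
    dcbJ d η N m ≤ Real.sqrt η + 2 * Real.pi * Real.sqrt d * ((dcbK d m : ℝ) / N) := by
  have h1 := dcbS_upper d N m
  have hKN : (0:ℝ) ≤ (dcbK d m : ℝ) / N := by positivity
  have h2 : dcbJ d η N m ≤ Real.sqrt (η + 4 * Real.pi ^ 2 * (d * ((dcbK d m : ℝ) / N) ^ 2)) := by
    rw [dcbJ_eq]
    apply Real.sqrt_le_sqrt
    nlinarith [sq_nonneg Real.pi]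
  have h3 : Real.sqrt (η + 4 * Real.pi ^ 2 * (d * ((dcbK d m : ℝ) / N) ^ 2)) ≤
      Real.sqrt η + Real.sqrt (4 * Real.pi ^ 2 * (d * ((dcbK d m : ℝ) / N) ^ 2)) :=
    dcb_sqrt_add_le _ _ hη.le (by positivity)
  have h4 : Real.sqrt (4 * Real.pi ^ 2 * (d * ((dcbK d m : ℝ) / N) ^ 2)) =
      2 * Real.pi * Real.sqrt d * ((dcbK d m : ℝ) / N) := by
    rw [show 4 * Real.pi ^ 2 * ((d:ℝ) * ((dcbK d m : ℝ) / N) ^ 2) =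
      (2 * Real.pi * ((dcbK d m : ℝ) / N)) ^ 2 * d by ring]
    rw [Real.sqrt_mul (by positivity), Real.sqrt_sq (by positivity)]
    ring
  linarith
def dcbjfun (d : ℕ) (m : Fin d → ℤ) : ℕ := Nat.log 2 (dcbK d m + 1)

noncomputable def dcbBox (d : ℕ) (B : ℕ) : Finset (Fin d → ℤ) :=
  Fintype.piFinset fun _ => Finset.Icc (-(B : ℤ)) B

lemma dcbBox_card (d B : ℕ) : (dcbBox d B).card = (2 * B + 1) ^ d := by
  rw [dcbBox, Fintype.card_piFinset]
  simp only [Int.card_Icc]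
  rw [Finset.prod_const, Finset.card_univ, Fintype.card_fin]
  congr 1
  omega

lemma mem_dcbBox (d B : ℕ) (m : Fin d → ℤ) (h : dcbK d m ≤ B) : m ∈ dcbBox d B := by
  rw [dcbBox, Fintype.mem_piFinset]
  intro i
  have h1 : (m i).natAbs ≤ dcbK d m :=
    Finset.le_sup (f := fun i => (m i).natAbs) (Finset.mem_univ i)
  have h2 : (m i).natAbs ≤ B := le_trans h1 h
  rw [Finset.mem_Icc]
  omega

lemma dcb_jfun_le (d : ℕ) (m : Fin d → ℤ) : 2 ^ dcbjfun d m ≤ dcbK d m + 1 :=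
  Nat.pow_log_le_self 2 (by omega)

lemma dcb_jfun_gt (d : ℕ) (m : Fin d → ℤ) : dcbK d m + 1 < 2 ^ (dcbjfun d m + 1) :=
  Nat.lt_pow_succ_log_self (by norm_num) _

lemma dcb_shell_master (d : ℕ) (f : (Fin d → ℤ) → ℝ) (b : ℕ → ℝ)
    (hf0 : ∀ m, 0 ≤ f m) (hb0 : ∀ j, 0 ≤ b j) (hfb : ∀ m, f m ≤ b (dcbjfun d m))
    (F : Finset (Fin d → ℤ)) :
    ∃ M : ℕ, ∑ m₁ ∈ F, f m₁ ≤
      ∑ j ∈ Finset.range M, ((8 : ℝ) ^ d * (2 : ℝ) ^ (j * d)) * b j := by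
  classical
  refine ⟨F.sup (dcbjfun d) + 1, ?_⟩
  rw [← Finset.sum_fiberwise_of_maps_to (g := dcbjfun d)
    (t := Finset.range (F.sup (dcbjfun d) + 1))
    (fun x hx => Finset.mem_range.2 (Nat.lt_succ_of_le (Finset.le_sup hx))) f]
  apply Finset.sum_le_sum
  intro j _
  have hcard : ((F.filter fun m₁ => dcbjfun d m₁ = j).card : ℝ) ≤ (8 : ℝ) ^ d * (2:ℝ) ^ (j * d) := by
    have hsub : (F.filter fun m₁ => dcbjfun d m₁ = j) ⊆ dcbBox d (2 ^ (j + 1)) := by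
      intro m₁ hm₁
      rw [Finset.mem_filter] at hm₁
      apply mem_dcbBox
      have := dcb_jfun_gt d m₁
      rw [hm₁.2] at this
      omega
    have h1 : (F.filter fun m₁ => dcbjfun d m₁ = j).card ≤ (2 * 2 ^ (j + 1) + 1) ^ d := by
      rw [← dcbBox_card]; exact Finset.card_le_card hsub
    have h2 : (2 * 2 ^ (j + 1) + 1) ^ d ≤ (2 ^ (j + 3)) ^ d := by
      apply Nat.pow_le_pow_left
      have : (1:ℕ) ≤ 2 ^ (j+2) := Nat.one_le_two_pow
      calc 2 * 2 ^ (j + 1) + 1 = 2 ^ (j + 2) + 1 := by ring_nf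
        _ ≤ 2 ^ (j + 2) + 2 ^ (j + 2) := by omega
        _ = 2 ^ (j + 3) := by ring
    have h3 : ((2 ^ (j + 3) : ℕ) ^ d : ℝ) = (8:ℝ) ^ d * (2:ℝ) ^ (j * d) := by
      push_cast
      rw [← pow_mul]
      rw [show (j + 3) * d = 3 * d + j * d by ring, pow_add]
      congr 1
      rw [pow_mul]
      norm_num
    calc ((F.filter fun m₁ => dcbjfun d m₁ = j).card : ℝ)
        ≤ (((2 ^ (j + 3) : ℕ) ^ d : ℕ) : ℝ) := by exact_mod_cast le_trans h1 h2
      _ = (8:ℝ) ^ d * (2:ℝ) ^ (j * d) := by exact_mod_cast h3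
  calc ∑ m₁ ∈ F.filter fun m₁ => dcbjfun d m₁ = j, f m₁
      ≤ (F.filter fun m₁ => dcbjfun d m₁ = j).card • b j := by
        apply Finset.sum_le_card_nsmul
        intro x hx
        rw [Finset.mem_filter] at hx
        rw [← hx.2]
        exact hfb x
    _ = ((F.filter fun m₁ => dcbjfun d m₁ = j).card : ℝ) * b j := by
        rw [nsmul_eq_mul]
    _ ≤ (8 : ℝ) ^ d * (2:ℝ) ^ (j * d) * b j := by
        exact mul_le_mul_of_nonneg_right hcard (hb0 j)

lemma dcb_pow_rpow (j : ℕ) (s : ℝ) : ((2:ℝ) ^ j) ^ s = ((2:ℝ) ^ s) ^ j := by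
  rw [← Real.rpow_natCast 2 j, ← Real.rpow_mul (by norm_num), mul_comm,
    Real.rpow_mul (by positivity), Real.rpow_natCast]

lemma dcb_geo_inc (s X : ℝ) (hs : 0 < s) (hX : 1 ≤ X) (M : ℕ) (P : ℕ → Prop) [DecidablePred P]
    (hP : ∀ j, P j → (2:ℝ) ^ j ≤ X) :
    ∑ j ∈ Finset.range M, (if P j then ((2:ℝ) ^ j) ^ s else 0) ≤
      (2:ℝ) ^ s / ((2:ℝ) ^ s - 1) * X ^ s := by
  have hr1 : (1:ℝ) < (2:ℝ) ^ s := (Real.one_lt_rpow_iff_of_pos (by norm_num)).2 (Or.inl ⟨by norm_num, hs⟩)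
  have hr0 : (0:ℝ) < (2:ℝ) ^ s := by linarith
  set r : ℝ := (2:ℝ) ^ s with hr
  set j₁ : ℕ := Nat.log 2 ⌊X⌋₊ with hj₁
  have hfl : 1 ≤ ⌊X⌋₊ := (Nat.one_le_floor_iff X).2 hX
  have hPle : ∀ j, P j → j ≤ j₁ := by
    intro j hj
    have h1 : (((2:ℕ) ^ j : ℕ) : ℝ) ≤ X := by push_cast; exact hP j hj
    have h2 : (2:ℕ) ^ j ≤ ⌊X⌋₊ := Nat.le_floor h1
    exact (Nat.le_log_iff_pow_le (by norm_num) (by omega)).2 h2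
  have step1 : ∑ j ∈ Finset.range M, (if P j then ((2:ℝ) ^ j) ^ s else 0) ≤
      ∑ j ∈ Finset.range M, (if j ≤ j₁ then r ^ j else 0) := by
    apply Finset.sum_le_sum
    intro j _
    by_cases hj : P j
    · rw [if_pos hj, if_pos (hPle j hj), dcb_pow_rpow]
    · rw [if_neg hj]
      positivity
  have step2 : ∑ j ∈ Finset.range M, (if j ≤ j₁ then r ^ j else 0) ≤
      ∑ j ∈ Finset.range (j₁ + 1), r ^ j := by
    rw [← Finset.sum_filter]
    apply Finset.sum_le_sum_of_subset_of_nonneg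
    · intro j hj
      rw [Finset.mem_filter, Finset.mem_range] at hj
      rw [Finset.mem_range]; omega
    · intro j _ _; positivity
  have step3 : ∑ j ∈ Finset.range (j₁ + 1), r ^ j = (r ^ (j₁ + 1) - 1) / (r - 1) :=
    geom_sum_eq (by linarith) _
  have hrj : r ^ j₁ ≤ X ^ s := by
    rw [← dcb_pow_rpow]
    apply Real.rpow_le_rpow (by positivity) _ hs.le
    calc ((2:ℝ) ^ j₁) = ((2 ^ j₁ : ℕ) : ℝ) := by push_cast; ring
      _ ≤ (⌊X⌋₊ : ℝ) := by exact_mod_cast Nat.pow_log_le_self 2 (by omega)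
      _ ≤ X := Nat.floor_le (by linarith)
  have step4 : (r ^ (j₁ + 1) - 1) / (r - 1) ≤ r / (r - 1) * X ^ s := by
    rw [div_mul_eq_mul_div]
    have hXs : (0:ℝ) < X ^ s := Real.rpow_pos_of_pos (by linarith) s
    have hnum : r ^ (j₁ + 1) - 1 ≤ r * X ^ s := by
      have he : r ^ (j₁ + 1) = r * r ^ j₁ := by ring
      nlinarith
    gcongr
  linarith

lemma dcb_geo_dec (s Q : ℝ) (hs : s < 0) (hQ : 0 < Q) (M : ℕ) (P : ℕ → Prop) [DecidablePred P]
    (hP : ∀ j, P j → Q ≤ (2:ℝ) ^ j) :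
    ∑ j ∈ Finset.range M, (if P j then ((2:ℝ) ^ j) ^ s else 0) ≤
      Q ^ s / (1 - (2:ℝ) ^ s) := by
  have hr1 : (2:ℝ) ^ s < 1 := by
    rw [← Real.rpow_zero 2]
    exact Real.rpow_lt_rpow_of_exponent_lt (by norm_num) hs
  have hr0 : (0:ℝ) < (2:ℝ) ^ s := Real.rpow_pos_of_pos (by norm_num) s
  set r : ℝ := (2:ℝ) ^ s with hr
  set j₀ : ℕ := Nat.clog 2 ⌈Q⌉₊ with hj₀
  have hQj₀ : Q ≤ (2:ℝ) ^ j₀ := by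
    calc Q ≤ (⌈Q⌉₊ : ℝ) := Nat.le_ceil Q
      _ ≤ ((2 ^ j₀ : ℕ) : ℝ) := by exact_mod_cast Nat.le_pow_clog (by norm_num) _
      _ = (2:ℝ) ^ j₀ := by push_cast; ring
  have hPge : ∀ j, P j → j₀ ≤ j := by
    intro j hj
    apply (Nat.clog_le_iff_le_pow (by norm_num)).2
    exact Nat.ceil_le.2 (by exact_mod_cast hP j hj)
  have hrQ : r ^ j₀ ≤ Q ^ s := by
    rw [← dcb_pow_rpow]
    exact Real.rpow_le_rpow_of_nonpos hQ hQj₀ hs.le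
  have step1 : ∑ j ∈ Finset.range M, (if P j then ((2:ℝ) ^ j) ^ s else 0) ≤
      ∑ j ∈ Finset.range M, (if j₀ ≤ j then r ^ j else 0) := by
    apply Finset.sum_le_sum
    intro j _
    by_cases hj : P j
    · rw [if_pos hj, if_pos (hPge j hj), dcb_pow_rpow]
    · rw [if_neg hj]; positivity
  have step2 : ∑ j ∈ Finset.range M, (if j₀ ≤ j then r ^ j else 0) ≤
      ∑ j ∈ Finset.Ico j₀ (max M j₀), r ^ j := by
    rw [← Finset.sum_filter]
    have h1 : Finset.filter (fun j => j₀ ≤ j) (Finset.range M) = Finset.Ico j₀ M := by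
      ext j
      simp [Finset.mem_filter, Finset.mem_range, Finset.mem_Ico, and_comm]
    rw [h1]
    apply Finset.sum_le_sum_of_subset_of_nonneg
    · exact Finset.Ico_subset_Ico le_rfl (le_max_left M j₀)
    · intro j _ _; positivity
  have step3 : ∑ j ∈ Finset.Ico j₀ (max M j₀), r ^ j = (r ^ max M j₀ - r ^ j₀) / (r - 1) :=
    geom_sum_Ico (by linarith) (le_max_right M j₀)
  have step4 : (r ^ max M j₀ - r ^ j₀) / (r - 1) ≤ Q ^ s / (1 - r) := by
    rw [show (r ^ max M j₀ - r ^ j₀) / (r - 1) = (r ^ j₀ - r ^ max M j₀) / (1 - r) by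
      rw [div_eq_div_iff (by linarith) (by linarith)]; ring]
    have hnum : r ^ j₀ - r ^ max M j₀ ≤ Q ^ s := by
      have : (0:ℝ) ≤ r ^ max M j₀ := by positivity
      linarith
    gcongr
  linarith
-- bridge lemmas between J and the dyadic scale A_j = √η + 2π·2^j/N

lemma dcb_Aj_le_J (d : ℕ) (hd : 1 ≤ d) (η : ℝ) (hη : 0 < η) (N : ℕ) (hN : 0 < N)
    (m : Fin d → ℤ) :
    Real.sqrt η + 2 * Real.pi * (2:ℝ) ^ (dcbjfun d m) / N ≤
      (3 + 2 * Real.pi / Real.sqrt η) * dcbJ d η N m := by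
  have hJpos := dcbJ_pos d η hη N m
  have hse : Real.sqrt η ≤ dcbJ d η N m := dcb_sqrt_eta_le d η hη.le N m
  have hsepos : 0 < Real.sqrt η := Real.sqrt_pos.2 hη
  have hpi := Real.pi_pos
  have hNr : (1:ℝ) ≤ (N:ℝ) := by exact_mod_cast hN
  rcases Nat.eq_zero_or_pos (dcbjfun d m) with hj | hj
  · rw [hj]
    have h1 : 2 * Real.pi * (2:ℝ) ^ (0:ℕ) / N ≤ 2 * Real.pi := by
      rw [pow_zero, mul_one]
      rw [div_le_iff₀ (by linarith)]
      nlinarith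
    have h2 : Real.sqrt η + 2 * Real.pi ≤ (1 + 2 * Real.pi / Real.sqrt η) * Real.sqrt η := by
      field_simp
      exact le_rfl
    have h3 : (1 + 2 * Real.pi / Real.sqrt η) * Real.sqrt η ≤
        (3 + 2 * Real.pi / Real.sqrt η) * dcbJ d η N m := by
      apply mul_le_mul _ hse hsepos.le _
      · have : (0:ℝ) < 2 * Real.pi / Real.sqrt η := by positivity
        linarith
      · positivity
    linarith
  · -- j ≥ 1 : 2^j ≤ 2 K
    have h2K : (2:ℕ) ^ (dcbjfun d m) ≤ 2 * dcbK d m := by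
      have h1 := dcb_jfun_le d m
      have h2 : (2:ℕ) ^ 1 ≤ 2 ^ (dcbjfun d m) := Nat.pow_le_pow_right (by norm_num) hj
      set a := (2:ℕ) ^ (dcbjfun d m)
      omega
    have h2Kr : ((2:ℝ)) ^ (dcbjfun d m) ≤ 2 * (dcbK d m : ℝ) := by exact_mod_cast h2K
    have hKJ := dcb_twopiK_le_J d hd η hη N m
    have h4 : 2 * Real.pi * (2:ℝ) ^ (dcbjfun d m) / N ≤ 2 * dcbJ d η N m := by
      rw [div_le_iff₀ (by linarith)]
      have hKN : 2 * Real.pi * ((dcbK d m : ℝ) / N) ≤ dcbJ d η N m := hKJ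
      have hKnn : (0:ℝ) ≤ (dcbK d m : ℝ) := by positivity
      have : 2 * Real.pi * (2:ℝ) ^ (dcbjfun d m) ≤ 2 * (2 * Real.pi * (dcbK d m : ℝ)) := by
        nlinarith
      calc 2 * Real.pi * (2:ℝ) ^ (dcbjfun d m) ≤ 2 * (2 * Real.pi * (dcbK d m : ℝ)) := this
        _ = 2 * (2 * Real.pi * ((dcbK d m : ℝ) / N)) * N := by field_simp
        _ ≤ 2 * dcbJ d η N m * N := by
            apply mul_le_mul_of_nonneg_right _ (by positivity)
            linarith
    have : (0:ℝ) ≤ 2 * Real.pi / Real.sqrt η := by positivity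
    nlinarith
lemma dcb_cond_upA (d : ℕ) (hd : 1 ≤ d) (η : ℝ) (hη : 0 < η) (N : ℕ) (hN : 0 < N)
    (Λ : ℝ) (hΛ : Real.sqrt η ≤ Λ) (m : Fin d → ℤ) (h : dcbJ d η N m ≤ Λ) :
    (2:ℝ) ^ (dcbjfun d m) ≤ (1 / Real.pi + 1 / Real.sqrt η) * N * Λ := by
  have hpi := Real.pi_pos
  have hsepos : 0 < Real.sqrt η := Real.sqrt_pos.2 hη
  have hNr : (1:ℝ) ≤ (N:ℝ) := by exact_mod_cast hN
  have hΛpos : 0 < Λ := lt_of_lt_of_le hsepos hΛ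
  have hKJ := dcb_twopiK_le_J d hd η hη N m
  have hK : 2 * Real.pi * ((dcbK d m : ℝ) / N) ≤ Λ := le_trans hKJ h
  have hKle : (dcbK d m : ℝ) ≤ (N:ℝ) * Λ / (2 * Real.pi) := by
    rw [le_div_iff₀ (by linarith)]
    have h0 : 2 * Real.pi * ((dcbK d m : ℝ) / N) * N = (dcbK d m : ℝ) * (2 * Real.pi) := by
      field_simp
    nlinarith [mul_le_mul_of_nonneg_right hK (le_of_lt (show (0:ℝ) < N by linarith))]
  have hone : (1:ℝ) ≤ (N:ℝ) * Λ / Real.sqrt η := by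
    rw [le_div_iff₀ hsepos]
    nlinarith
  have hjK : ((2:ℝ)) ^ (dcbjfun d m) ≤ (dcbK d m : ℝ) + 1 := by
    exact_mod_cast dcb_jfun_le d m
  have heq : (1 / Real.pi + 1 / Real.sqrt η) * N * Λ
      = (N:ℝ) * Λ / Real.pi + (N:ℝ) * Λ / Real.sqrt η := by
    field_simp
  have hmono : (N:ℝ) * Λ / (2 * Real.pi) ≤ (N:ℝ) * Λ / Real.pi := by
    gcongr
    all_goals first | positivity | linarith
  calc ((2:ℝ)) ^ (dcbjfun d m) ≤ (dcbK d m : ℝ) + 1 := hjK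
    _ ≤ (N:ℝ) * Λ / (2 * Real.pi) + (N:ℝ) * Λ / Real.sqrt η := by linarith
    _ ≤ (N:ℝ) * Λ / Real.pi + (N:ℝ) * Λ / Real.sqrt η := by linarith
    _ = (1 / Real.pi + 1 / Real.sqrt η) * N * Λ := heq.symm

lemma dcb_cond_upB (d : ℕ) (hd : 1 ≤ d) (η : ℝ) (hη : 0 < η) (N : ℕ) (hN : 0 < N)
    (Λ : ℝ) (m : Fin d → ℤ) (h : Λ / 2 ≤ dcbJ d η N m) :
    Λ ≤ 4 * Real.sqrt d * (Real.sqrt η + 2 * Real.pi * (2:ℝ) ^ (dcbjfun d m) / N) := by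
  have hpi := Real.pi_pos
  have hse : (0:ℝ) ≤ Real.sqrt η := Real.sqrt_nonneg η
  have hNr : (1:ℝ) ≤ (N:ℝ) := by exact_mod_cast hN
  have hsd : (1:ℝ) ≤ Real.sqrt d := by
    rw [show (1:ℝ) = Real.sqrt 1 by simp]
    exact Real.sqrt_le_sqrt (by exact_mod_cast hd)
  have hJle := dcbJ_le d η hη N m
  set X : ℝ := (2:ℝ) ^ (dcbjfun d m) with hX
  have hXpos : (0:ℝ) < X := by positivity
  have hK2j : (dcbK d m : ℝ) ≤ 2 * X := by
    have h1 := dcb_jfun_gt d m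
    have h2 : dcbK d m ≤ 2 * 2 ^ (dcbjfun d m) := by
      have h3 : (2:ℕ) ^ (dcbjfun d m + 1) = 2 * 2 ^ (dcbjfun d m) := by ring
      omega
    rw [hX]
    exact_mod_cast h2
  have hKN : (dcbK d m : ℝ) / N ≤ 2 * X / N := by
    gcongr
  calc Λ ≤ 2 * dcbJ d η N m := by linarith
    _ ≤ 2 * Real.sqrt η + 4 * Real.pi * Real.sqrt d * ((dcbK d m : ℝ) / N) := by linarith
    _ ≤ 2 * Real.sqrt η + 4 * Real.sqrt d * (2 * Real.pi * X / N) := by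
        have e3 : 4 * Real.pi * Real.sqrt d * ((dcbK d m : ℝ) / N) ≤
            4 * Real.pi * Real.sqrt d * (2 * X / N) := by
          gcongr
          all_goals positivity
        have e6 : (4:ℝ) * Real.pi * Real.sqrt d * (2 * X / N) =
            4 * Real.sqrt d * (2 * Real.pi * X / N) := by ring
        linarith
    _ ≤ 4 * Real.sqrt d * (Real.sqrt η + 2 * Real.pi * X / N) := by nlinarith
lemma dcb_rpow_anti {a b : ℝ} (ha : 0 < a) (hab : a ≤ b) {t : ℝ} (ht : 0 ≤ t) :
    b ^ (-t) ≤ a ^ (-t) :=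
  Real.rpow_le_rpow_of_nonpos ha hab (by linarith)

lemma dcb_div_rpow_neg (A c : ℝ) (hA : 0 ≤ A) (hc : 0 ≤ c) (t : ℝ) :
    (A / c) ^ (-t) = A ^ (-t) * c ^ t := by
  rw [Real.div_rpow hA hc, Real.rpow_neg hc, div_eq_mul_inv, inv_inv]

lemma dcb_pow_mul_rpow (j D : ℕ) : (2:ℝ) ^ (j * D) = ((2:ℝ) ^ j) ^ (D:ℝ) := by
  rw [pow_mul, Real.rpow_natCast]

lemma dcb_engineA (d : ℕ) (hd : 1 ≤ d) (η : ℝ) (hη : 0 < η) (t : ℝ) (ht0 : 0 < t)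
    (htd : t < d) :
    ∃ C : ℝ, 0 < C ∧ ∀ N : ℕ, 0 < N → ∀ Λ : ℝ, Real.sqrt η ≤ Λ →
      ∀ F : Finset (Fin d → ℤ),
        ∑ m₁ ∈ F, (if dcbJ d η N m₁ ≤ Λ then dcbJ d η N m₁ ^ (-t) else 0) ≤
          C * (N:ℝ) ^ ((d:ℝ)) * Λ ^ ((d:ℝ) - t) := by
  classical
  have hpi := Real.pi_pos
  have hsepos : 0 < Real.sqrt η := Real.sqrt_pos.2 hη
  have hd0 : (0:ℝ) < (d:ℝ) := by exact_mod_cast hd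
  have hdt : (0:ℝ) < (d:ℝ) - t := by linarith
  have h2d : (1:ℝ) < (2:ℝ) ^ ((d:ℝ)) :=
    (Real.one_lt_rpow_iff_of_pos (by norm_num)).2 (Or.inl ⟨by norm_num, hd0⟩)
  have h2dt : (1:ℝ) < (2:ℝ) ^ ((d:ℝ) - t) :=
    (Real.one_lt_rpow_iff_of_pos (by norm_num)).2 (Or.inl ⟨by norm_num, hdt⟩)
  set κ1 : ℝ := (2:ℝ) ^ ((d:ℝ)) / ((2:ℝ) ^ ((d:ℝ)) - 1) with hκ1
  set κ2 : ℝ := (2:ℝ) ^ ((d:ℝ) - t) / ((2:ℝ) ^ ((d:ℝ) - t) - 1) with hκ2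
  have hκ1pos : 0 < κ1 := by
    rw [hκ1]; apply div_pos (by positivity) (by linarith)
  have hκ2pos : 0 < κ2 := by
    rw [hκ2]; apply div_pos (by positivity) (by linarith)
  set BigC : ℝ := (8:ℝ)^d * (3 + 2 * Real.pi / Real.sqrt η) ^ t *
      (κ1 * Real.sqrt η ^ (-t) * Real.sqrt η ^ (t - (d:ℝ))
      + (2 * Real.pi) ^ (-t) * κ2 * (1 / Real.pi + 1 / Real.sqrt η) ^ ((d:ℝ) - t)) with hBigC
  refine ⟨max 1 BigC, lt_max_iff.2 (Or.inl one_pos), ?_⟩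
  intro N hN Λ hΛ F
  have hNr : (1:ℝ) ≤ (N:ℝ) := by exact_mod_cast hN
  have hNpos : (0:ℝ) < (N:ℝ) := by linarith
  have hΛpos : 0 < Λ := lt_of_lt_of_le hsepos hΛ
  have hcppos : (0:ℝ) < 3 + 2 * Real.pi / Real.sqrt η := by positivity
  have hc2pos : (0:ℝ) < 1 / Real.pi + 1 / Real.sqrt η := by positivity
  -- the dyadic bound function
  set b : ℕ → ℝ := fun j =>
    if (2:ℝ) ^ j ≤ (1 / Real.pi + 1 / Real.sqrt η) * N * Λ then
      (3 + 2 * Real.pi / Real.sqrt η) ^ t *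
        (Real.sqrt η + 2 * Real.pi * (2:ℝ) ^ j / N) ^ (-t)
    else 0 with hb
  have hb0 : ∀ j, 0 ≤ b j := by
    intro j; rw [hb]; dsimp only; split
    · positivity
    · exact le_rfl
  have hf0 : ∀ m₁ : Fin d → ℤ,
      0 ≤ (if dcbJ d η N m₁ ≤ Λ then dcbJ d η N m₁ ^ (-t) else 0) := by
    intro m₁; split
    · exact Real.rpow_nonneg (dcbJ_pos d η hη N m₁).le _
    · exact le_rfl
  have hfb : ∀ m₁ : Fin d → ℤ,
      (if dcbJ d η N m₁ ≤ Λ then dcbJ d η N m₁ ^ (-t) else 0) ≤ b (dcbjfun d m₁) := by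
    intro m₁
    split
    case isTrue hcond =>
      rw [hb]; dsimp only
      rw [if_pos (dcb_cond_upA d hd η hη N hN Λ hΛ m₁ hcond)]
      have hAjpos : (0:ℝ) < Real.sqrt η + 2 * Real.pi * (2:ℝ) ^ (dcbjfun d m₁) / N := by
        positivity
      have hle : (Real.sqrt η + 2 * Real.pi * (2:ℝ) ^ (dcbjfun d m₁) / N) /
          (3 + 2 * Real.pi / Real.sqrt η) ≤ dcbJ d η N m₁ := by
        rw [div_le_iff₀ hcppos]
        have h := dcb_Aj_le_J d hd η hη N hN m₁
        linarith
      calc dcbJ d η N m₁ ^ (-t)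
          ≤ ((Real.sqrt η + 2 * Real.pi * (2:ℝ) ^ (dcbjfun d m₁) / N) /
              (3 + 2 * Real.pi / Real.sqrt η)) ^ (-t) :=
            dcb_rpow_anti (by positivity) hle ht0.le
        _ = (Real.sqrt η + 2 * Real.pi * (2:ℝ) ^ (dcbjfun d m₁) / N) ^ (-t) *
              (3 + 2 * Real.pi / Real.sqrt η) ^ t :=
            dcb_div_rpow_neg _ _ hAjpos.le hcppos.le t
        _ = (3 + 2 * Real.pi / Real.sqrt η) ^ t *
              (Real.sqrt η + 2 * Real.pi * (2:ℝ) ^ (dcbjfun d m₁) / N) ^ (-t) := by ring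
    case isFalse hcond => exact hb0 _
  obtain ⟨M, hM⟩ := dcb_shell_master d _ b hf0 hb0 hfb F
  refine le_trans hM ?_
  -- termwise split into two geometric pieces
  have hterm : ∀ j, ((8:ℝ) ^ d * (2:ℝ) ^ (j * d)) * b j ≤
      (8:ℝ) ^ d * (3 + 2 * Real.pi / Real.sqrt η) ^ t * Real.sqrt η ^ (-t) *
        (if (2:ℝ) ^ j ≤ (N:ℝ) then ((2:ℝ) ^ j) ^ ((d:ℝ)) else 0)
      + (8:ℝ) ^ d * (3 + 2 * Real.pi / Real.sqrt η) ^ t *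
          ((2 * Real.pi) ^ (-t) * (N:ℝ) ^ t) *
        (if (2:ℝ) ^ j ≤ (1 / Real.pi + 1 / Real.sqrt η) * N * Λ then
          ((2:ℝ) ^ j) ^ ((d:ℝ) - t) else 0) := by
    intro j
    have h2j : (0:ℝ) < (2:ℝ) ^ j := by positivity
    rw [hb]; dsimp only
    by_cases hc : (2:ℝ) ^ j ≤ (1 / Real.pi + 1 / Real.sqrt η) * N * Λ
    · rw [if_pos hc, if_pos hc]
      have hAjpos : (0:ℝ) < Real.sqrt η + 2 * Real.pi * (2:ℝ) ^ j / N := by positivity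
      by_cases hsmall : (2:ℝ) ^ j ≤ (N:ℝ)
      · rw [if_pos hsmall]
        have hb1 : (Real.sqrt η + 2 * Real.pi * (2:ℝ) ^ j / N) ^ (-t) ≤ Real.sqrt η ^ (-t) :=
          dcb_rpow_anti hsepos (le_add_of_nonneg_right (by positivity)) ht0.le
        have hpos2 : (0:ℝ) ≤ (8:ℝ) ^ d * (3 + 2 * Real.pi / Real.sqrt η) ^ t *
            ((2 * Real.pi) ^ (-t) * (N:ℝ) ^ t) * ((2:ℝ) ^ j) ^ ((d:ℝ) - t) := by positivity
        have hmain : ((8:ℝ) ^ d * (2:ℝ) ^ (j * d)) *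
            ((3 + 2 * Real.pi / Real.sqrt η) ^ t *
              (Real.sqrt η + 2 * Real.pi * (2:ℝ) ^ j / N) ^ (-t)) ≤
            (8:ℝ) ^ d * (3 + 2 * Real.pi / Real.sqrt η) ^ t * Real.sqrt η ^ (-t) *
              ((2:ℝ) ^ j) ^ ((d:ℝ)) := by
          rw [dcb_pow_mul_rpow]
          have e : (8:ℝ) ^ d * (3 + 2 * Real.pi / Real.sqrt η) ^ t * Real.sqrt η ^ (-t) *
              ((2:ℝ) ^ j) ^ ((d:ℝ)) =
              ((8:ℝ) ^ d * ((2:ℝ)^j) ^ ((d:ℝ)) * (3 + 2 * Real.pi / Real.sqrt η) ^ t) *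
                Real.sqrt η ^ (-t) := by ring
          rw [e]
          calc ((8:ℝ) ^ d * ((2:ℝ)^j) ^ ((d:ℝ))) *
              ((3 + 2 * Real.pi / Real.sqrt η) ^ t *
                (Real.sqrt η + 2 * Real.pi * (2:ℝ) ^ j / N) ^ (-t))
              = ((8:ℝ) ^ d * ((2:ℝ)^j) ^ ((d:ℝ)) * (3 + 2 * Real.pi / Real.sqrt η) ^ t) *
                (Real.sqrt η + 2 * Real.pi * (2:ℝ) ^ j / N) ^ (-t) := by ring
            _ ≤ ((8:ℝ) ^ d * ((2:ℝ)^j) ^ ((d:ℝ)) * (3 + 2 * Real.pi / Real.sqrt η) ^ t) *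
                Real.sqrt η ^ (-t) :=
                mul_le_mul_of_nonneg_left hb1 (by positivity)
        linarith
      · rw [if_neg hsmall]
        have hb2 : (Real.sqrt η + 2 * Real.pi * (2:ℝ) ^ j / N) ^ (-t) ≤
            (2 * Real.pi) ^ (-t) * (N:ℝ) ^ t * ((2:ℝ) ^ j) ^ (-t) := by
          have hA2 : (2 * Real.pi / N) * (2:ℝ) ^ j ≤
              Real.sqrt η + 2 * Real.pi * (2:ℝ) ^ j / N := by
            have e : (2 * Real.pi / (N:ℝ)) * (2:ℝ) ^ j = 2 * Real.pi * (2:ℝ) ^ j / N := by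
              ring
            rw [e]
            linarith
          have h1 : (Real.sqrt η + 2 * Real.pi * (2:ℝ) ^ j / N) ^ (-t) ≤
              ((2 * Real.pi / N) * (2:ℝ) ^ j) ^ (-t) :=
            dcb_rpow_anti (by positivity) hA2 ht0.le
          have h2 : ((2 * Real.pi / (N:ℝ)) * (2:ℝ) ^ j) ^ (-t) =
              (2 * Real.pi / (N:ℝ)) ^ (-t) * ((2:ℝ) ^ j) ^ (-t) :=
            Real.mul_rpow (by positivity) (by positivity)
          have h3 : (2 * Real.pi / (N:ℝ)) ^ (-t) = (2 * Real.pi) ^ (-t) * (N:ℝ) ^ t :=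
            dcb_div_rpow_neg _ _ (by positivity) (by positivity) t
          rw [h2, h3] at h1
          exact h1
        have hsplit : ((2:ℝ) ^ j) ^ ((d:ℝ) - t) = ((2:ℝ)^j) ^ ((d:ℝ)) * ((2:ℝ)^j) ^ (-t) := by
          rw [show (d:ℝ) - t = (d:ℝ) + (-t) by ring, Real.rpow_add h2j]
        have hmain : ((8:ℝ) ^ d * (2:ℝ) ^ (j * d)) *
            ((3 + 2 * Real.pi / Real.sqrt η) ^ t *
              (Real.sqrt η + 2 * Real.pi * (2:ℝ) ^ j / N) ^ (-t)) ≤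
            (8:ℝ) ^ d * (3 + 2 * Real.pi / Real.sqrt η) ^ t *
              ((2 * Real.pi) ^ (-t) * (N:ℝ) ^ t) * ((2:ℝ) ^ j) ^ ((d:ℝ) - t) := by
          rw [dcb_pow_mul_rpow, hsplit]
          calc ((8:ℝ) ^ d * ((2:ℝ)^j) ^ ((d:ℝ))) *
              ((3 + 2 * Real.pi / Real.sqrt η) ^ t *
                (Real.sqrt η + 2 * Real.pi * (2:ℝ) ^ j / N) ^ (-t))
              = ((8:ℝ) ^ d * ((2:ℝ)^j) ^ ((d:ℝ)) * (3 + 2 * Real.pi / Real.sqrt η) ^ t) *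
                (Real.sqrt η + 2 * Real.pi * (2:ℝ) ^ j / N) ^ (-t) := by ring
            _ ≤ ((8:ℝ) ^ d * ((2:ℝ)^j) ^ ((d:ℝ)) * (3 + 2 * Real.pi / Real.sqrt η) ^ t) *
                ((2 * Real.pi) ^ (-t) * (N:ℝ) ^ t * ((2:ℝ) ^ j) ^ (-t)) :=
                mul_le_mul_of_nonneg_left hb2 (by positivity)
            _ = (8:ℝ) ^ d * (3 + 2 * Real.pi / Real.sqrt η) ^ t *
                ((2 * Real.pi) ^ (-t) * (N:ℝ) ^ t) *
                (((2:ℝ)^j) ^ ((d:ℝ)) * ((2:ℝ) ^ j) ^ (-t)) := by ring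
        have hpos1 : (0:ℝ) ≤ (8:ℝ) ^ d * (3 + 2 * Real.pi / Real.sqrt η) ^ t *
            Real.sqrt η ^ (-t) * 0 := by simp
        linarith
    · rw [if_neg hc, if_neg hc, mul_zero, mul_zero, add_zero]
      split
      · positivity
      · simp
  refine le_trans (Finset.sum_le_sum fun j (_ : j ∈ Finset.range M) => hterm j) ?_
  rw [Finset.sum_add_distrib, ← Finset.mul_sum, ← Finset.mul_sum]
  have hgeo1 : ∑ j ∈ Finset.range M,
      (if (2:ℝ) ^ j ≤ (N:ℝ) then ((2:ℝ) ^ j) ^ ((d:ℝ)) else 0)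
      ≤ κ1 * (N:ℝ) ^ ((d:ℝ)) :=
    dcb_geo_inc (d:ℝ) (N:ℝ) hd0 hNr M _ (fun j hj => hj)
  have hX2 : (1:ℝ) ≤ (1 / Real.pi + 1 / Real.sqrt η) * N * Λ := by
    have h1 : (1:ℝ) / Real.sqrt η ≤ 1 / Real.pi + 1 / Real.sqrt η := by
      have : (0:ℝ) < 1 / Real.pi := by positivity
      linarith
    have h2 : Real.sqrt η ≤ (N:ℝ) * Λ := by nlinarith
    calc (1:ℝ) = (1 / Real.sqrt η) * Real.sqrt η := by field_simp
      _ ≤ (1 / Real.pi + 1 / Real.sqrt η) * ((N:ℝ) * Λ) :=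
          mul_le_mul h1 h2 hsepos.le (by positivity)
      _ = (1 / Real.pi + 1 / Real.sqrt η) * N * Λ := by ring
  have hgeo2 : ∑ j ∈ Finset.range M,
      (if (2:ℝ) ^ j ≤ (1 / Real.pi + 1 / Real.sqrt η) * N * Λ then
        ((2:ℝ) ^ j) ^ ((d:ℝ) - t) else 0)
      ≤ κ2 * ((1 / Real.pi + 1 / Real.sqrt η) * N * Λ) ^ ((d:ℝ) - t) :=
    dcb_geo_inc ((d:ℝ) - t) _ hdt hX2 M _ (fun j hj => hj)
  have hNd : (0:ℝ) < (N:ℝ) ^ ((d:ℝ)) := Real.rpow_pos_of_pos hNpos _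
  have hLd : (0:ℝ) < Λ ^ ((d:ℝ) - t) := Real.rpow_pos_of_pos hΛpos _
  have hfac : ((1 / Real.pi + 1 / Real.sqrt η) * N * Λ) ^ ((d:ℝ) - t) =
      (1 / Real.pi + 1 / Real.sqrt η) ^ ((d:ℝ)-t) * (N:ℝ) ^ ((d:ℝ)-t) * Λ ^ ((d:ℝ)-t) := by
    rw [Real.mul_rpow (by positivity) hΛpos.le, Real.mul_rpow hc2pos.le hNpos.le]
  have hNsplit : (N:ℝ) ^ t * (N:ℝ) ^ ((d:ℝ) - t) = (N:ℝ) ^ ((d:ℝ)) := by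
    rw [← Real.rpow_add hNpos]
    congr 1
    ring
  have hse1 : (1:ℝ) ≤ Real.sqrt η ^ (t - (d:ℝ)) * Λ ^ ((d:ℝ) - t) := by
    have h1 : Real.sqrt η ^ ((d:ℝ) - t) ≤ Λ ^ ((d:ℝ) - t) :=
      Real.rpow_le_rpow hsepos.le hΛ hdt.le
    have h2 : Real.sqrt η ^ (t - (d:ℝ)) * Real.sqrt η ^ ((d:ℝ) - t) = 1 := by
      rw [← Real.rpow_add hsepos]
      norm_num
    have h3 : (0:ℝ) < Real.sqrt η ^ (t - (d:ℝ)) := Real.rpow_pos_of_pos hsepos _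
    nlinarith
  set G1 : ℝ := ∑ j ∈ Finset.range M,
      (if (2:ℝ) ^ j ≤ (N:ℝ) then ((2:ℝ) ^ j) ^ ((d:ℝ)) else 0) with hG1
  set G2 : ℝ := ∑ j ∈ Finset.range M,
      (if (2:ℝ) ^ j ≤ (1 / Real.pi + 1 / Real.sqrt η) * N * Λ then
        ((2:ℝ) ^ j) ^ ((d:ℝ) - t) else 0) with hG2
  have hD1 : (0:ℝ) ≤ (8:ℝ) ^ d * (3 + 2 * Real.pi / Real.sqrt η) ^ t * Real.sqrt η ^ (-t) := by
    positivity
  have hD2 : (0:ℝ) ≤ (8:ℝ) ^ d * (3 + 2 * Real.pi / Real.sqrt η) ^ t *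
      ((2 * Real.pi) ^ (-t) * (N:ℝ) ^ t) := by positivity
  have h1 : (8:ℝ) ^ d * (3 + 2 * Real.pi / Real.sqrt η) ^ t * Real.sqrt η ^ (-t) * G1 ≤
      (8:ℝ) ^ d * (3 + 2 * Real.pi / Real.sqrt η) ^ t * Real.sqrt η ^ (-t) *
        (κ1 * (N:ℝ) ^ ((d:ℝ))) :=
    mul_le_mul_of_nonneg_left hgeo1 hD1
  have h2 : (8:ℝ) ^ d * (3 + 2 * Real.pi / Real.sqrt η) ^ t *
      ((2 * Real.pi) ^ (-t) * (N:ℝ) ^ t) * G2 ≤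
      (8:ℝ) ^ d * (3 + 2 * Real.pi / Real.sqrt η) ^ t *
        ((2 * Real.pi) ^ (-t) * (N:ℝ) ^ t) *
        (κ2 * ((1 / Real.pi + 1 / Real.sqrt η) * N * Λ) ^ ((d:ℝ) - t)) :=
    mul_le_mul_of_nonneg_left hgeo2 hD2
  have h3 : (8:ℝ) ^ d * (3 + 2 * Real.pi / Real.sqrt η) ^ t * Real.sqrt η ^ (-t) *
      (κ1 * (N:ℝ) ^ ((d:ℝ))) ≤
      (8:ℝ)^d * (3 + 2 * Real.pi / Real.sqrt η) ^ t *
        (κ1 * Real.sqrt η ^ (-t) * Real.sqrt η ^ (t - (d:ℝ))) * (N:ℝ) ^ ((d:ℝ)) *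
          Λ ^ ((d:ℝ) - t) := by
    have hmul := mul_le_mul_of_nonneg_left hse1
      (show (0:ℝ) ≤ (8:ℝ) ^ d * (3 + 2 * Real.pi / Real.sqrt η) ^ t * Real.sqrt η ^ (-t) *
        (κ1 * (N:ℝ) ^ ((d:ℝ))) by positivity)
    calc (8:ℝ) ^ d * (3 + 2 * Real.pi / Real.sqrt η) ^ t * Real.sqrt η ^ (-t) *
        (κ1 * (N:ℝ) ^ ((d:ℝ)))
        = (8:ℝ) ^ d * (3 + 2 * Real.pi / Real.sqrt η) ^ t * Real.sqrt η ^ (-t) *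
          (κ1 * (N:ℝ) ^ ((d:ℝ))) * 1 := by ring
      _ ≤ (8:ℝ) ^ d * (3 + 2 * Real.pi / Real.sqrt η) ^ t * Real.sqrt η ^ (-t) *
          (κ1 * (N:ℝ) ^ ((d:ℝ))) * (Real.sqrt η ^ (t - (d:ℝ)) * Λ ^ ((d:ℝ) - t)) := hmul
      _ = (8:ℝ)^d * (3 + 2 * Real.pi / Real.sqrt η) ^ t *
          (κ1 * Real.sqrt η ^ (-t) * Real.sqrt η ^ (t - (d:ℝ))) * (N:ℝ) ^ ((d:ℝ)) *
            Λ ^ ((d:ℝ) - t) := by ring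
  have h4 : (8:ℝ) ^ d * (3 + 2 * Real.pi / Real.sqrt η) ^ t *
      ((2 * Real.pi) ^ (-t) * (N:ℝ) ^ t) *
      (κ2 * ((1 / Real.pi + 1 / Real.sqrt η) * N * Λ) ^ ((d:ℝ) - t)) =
      (8:ℝ)^d * (3 + 2 * Real.pi / Real.sqrt η) ^ t *
        ((2 * Real.pi) ^ (-t) * κ2 * (1 / Real.pi + 1 / Real.sqrt η) ^ ((d:ℝ) - t)) *
        (N:ℝ) ^ ((d:ℝ)) * Λ ^ ((d:ℝ) - t) := by
    rw [hfac, ← hNsplit]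
    ring
  have hBig : (8:ℝ)^d * (3 + 2 * Real.pi / Real.sqrt η) ^ t *
        (κ1 * Real.sqrt η ^ (-t) * Real.sqrt η ^ (t - (d:ℝ))) * (N:ℝ) ^ ((d:ℝ)) *
          Λ ^ ((d:ℝ) - t)
      + (8:ℝ)^d * (3 + 2 * Real.pi / Real.sqrt η) ^ t *
        ((2 * Real.pi) ^ (-t) * κ2 * (1 / Real.pi + 1 / Real.sqrt η) ^ ((d:ℝ) - t)) *
        (N:ℝ) ^ ((d:ℝ)) * Λ ^ ((d:ℝ) - t)
      = BigC * (N:ℝ) ^ ((d:ℝ)) * Λ ^ ((d:ℝ) - t) := by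
    rw [hBigC]
    ring
  have hfinal : BigC * (N:ℝ) ^ ((d:ℝ)) * Λ ^ ((d:ℝ) - t) ≤
      max 1 BigC * (N:ℝ) ^ ((d:ℝ)) * Λ ^ ((d:ℝ) - t) :=
    mul_le_mul_of_nonneg_right
      (mul_le_mul_of_nonneg_right (le_max_right 1 BigC) hNd.le) hLd.le
  calc (8:ℝ) ^ d * (3 + 2 * Real.pi / Real.sqrt η) ^ t * Real.sqrt η ^ (-t) * G1
      + (8:ℝ) ^ d * (3 + 2 * Real.pi / Real.sqrt η) ^ t *
          ((2 * Real.pi) ^ (-t) * (N:ℝ) ^ t) * G2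
      ≤ (8:ℝ) ^ d * (3 + 2 * Real.pi / Real.sqrt η) ^ t * Real.sqrt η ^ (-t) *
          (κ1 * (N:ℝ) ^ ((d:ℝ)))
        + (8:ℝ) ^ d * (3 + 2 * Real.pi / Real.sqrt η) ^ t *
          ((2 * Real.pi) ^ (-t) * (N:ℝ) ^ t) *
          (κ2 * ((1 / Real.pi + 1 / Real.sqrt η) * N * Λ) ^ ((d:ℝ) - t)) := add_le_add h1 h2
    _ ≤ (8:ℝ)^d * (3 + 2 * Real.pi / Real.sqrt η) ^ t *
        (κ1 * Real.sqrt η ^ (-t) * Real.sqrt η ^ (t - (d:ℝ))) * (N:ℝ) ^ ((d:ℝ)) *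
          Λ ^ ((d:ℝ) - t)
      + (8:ℝ)^d * (3 + 2 * Real.pi / Real.sqrt η) ^ t *
        ((2 * Real.pi) ^ (-t) * κ2 * (1 / Real.pi + 1 / Real.sqrt η) ^ ((d:ℝ) - t)) *
        (N:ℝ) ^ ((d:ℝ)) * Λ ^ ((d:ℝ) - t) := add_le_add h3 (le_of_eq h4)
    _ = BigC * (N:ℝ) ^ ((d:ℝ)) * Λ ^ ((d:ℝ) - t) := hBig
    _ ≤ max 1 BigC * (N:ℝ) ^ ((d:ℝ)) * Λ ^ ((d:ℝ) - t) := hfinal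
lemma dcb_engineB (d : ℕ) (hd : 1 ≤ d) (η : ℝ) (hη : 0 < η) (t : ℝ) (htd : (d:ℝ) < t) :
    ∃ C : ℝ, 0 < C ∧ ∀ N : ℕ, 0 < N → ∀ Λ : ℝ, Real.sqrt η ≤ Λ →
      ∀ F : Finset (Fin d → ℤ),
        ∑ m₁ ∈ F, (if Λ / 2 ≤ dcbJ d η N m₁ then dcbJ d η N m₁ ^ (-t) else 0) ≤
          C * (N:ℝ) ^ ((d:ℝ)) * Λ ^ ((d:ℝ) - t) := by
  classical
  have hpi := Real.pi_pos
  have hsepos : 0 < Real.sqrt η := Real.sqrt_pos.2 hη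
  have hd0 : (0:ℝ) < (d:ℝ) := by exact_mod_cast hd
  have ht0 : (0:ℝ) < t := lt_trans hd0 htd
  have hdt : (d:ℝ) - t < 0 := by linarith
  have hsd : (1:ℝ) ≤ Real.sqrt d := by
    rw [show (1:ℝ) = Real.sqrt 1 by simp]
    exact Real.sqrt_le_sqrt (by exact_mod_cast hd)
  have h2d : (1:ℝ) < (2:ℝ) ^ ((d:ℝ)) :=
    (Real.one_lt_rpow_iff_of_pos (by norm_num)).2 (Or.inl ⟨by norm_num, hd0⟩)
  have h2dt : (2:ℝ) ^ ((d:ℝ) - t) < 1 := by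
    rw [show (1:ℝ) = (2:ℝ) ^ (0:ℝ) by simp]
    exact Real.rpow_lt_rpow_of_exponent_lt (by norm_num) hdt
  have h2dtpos : (0:ℝ) < (2:ℝ) ^ ((d:ℝ) - t) := Real.rpow_pos_of_pos (by norm_num) _
  set κ1 : ℝ := (2:ℝ) ^ ((d:ℝ)) / ((2:ℝ) ^ ((d:ℝ)) - 1) with hκ1
  have hκ1pos : 0 < κ1 := by
    rw [hκ1]; apply div_pos (by positivity) (by linarith)
  set κ3 : ℝ := 1 / (1 - (2:ℝ) ^ ((d:ℝ) - t)) with hκ3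
  have hκ3pos : 0 < κ3 := by
    rw [hκ3]; apply div_pos one_pos (by linarith)
  set Csmall : ℝ := (8:ℝ)^d * (3 + 2 * Real.pi / Real.sqrt η) ^ t *
      (Real.sqrt η ^ (-t) * κ1 + (2 * Real.pi) ^ (-t) * κ3) *
      (8 * Real.sqrt d * Real.sqrt η) ^ (t - (d:ℝ)) with hCsmall
  set Cbig : ℝ := (8:ℝ)^d * (3 + 2 * Real.pi / Real.sqrt η) ^ t *
      ((2 * Real.pi) ^ (-t) * κ3 * (16 * Real.pi * Real.sqrt d) ^ (t - (d:ℝ))) with hCbig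
  have hCsmall0 : 0 ≤ Csmall := by
    rw [hCsmall]; positivity
  have hCbig0 : 0 ≤ Cbig := by
    rw [hCbig]; positivity
  refine ⟨max 1 (Csmall + Cbig), lt_max_iff.2 (Or.inl one_pos), ?_⟩
  intro N hN Λ hΛ F
  have hNr : (1:ℝ) ≤ (N:ℝ) := by exact_mod_cast hN
  have hNpos : (0:ℝ) < (N:ℝ) := by linarith
  have hΛpos : 0 < Λ := lt_of_lt_of_le hsepos hΛ
  have hcppos : (0:ℝ) < 3 + 2 * Real.pi / Real.sqrt η := by positivity
  have hNd : (0:ℝ) < (N:ℝ) ^ ((d:ℝ)) := Real.rpow_pos_of_pos hNpos _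
  have hLd : (0:ℝ) < Λ ^ ((d:ℝ) - t) := Real.rpow_pos_of_pos hΛpos _
  set b : ℕ → ℝ := fun j =>
    if Λ ≤ 4 * Real.sqrt d * (Real.sqrt η + 2 * Real.pi * (2:ℝ) ^ j / N) then
      (3 + 2 * Real.pi / Real.sqrt η) ^ t *
        (Real.sqrt η + 2 * Real.pi * (2:ℝ) ^ j / N) ^ (-t)
    else 0 with hb
  have hb0 : ∀ j, 0 ≤ b j := by
    intro j; rw [hb]; dsimp only; split
    · positivity
    · exact le_rfl
  have hf0 : ∀ m₁ : Fin d → ℤ,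
      0 ≤ (if Λ / 2 ≤ dcbJ d η N m₁ then dcbJ d η N m₁ ^ (-t) else 0) := by
    intro m₁; split
    · exact Real.rpow_nonneg (dcbJ_pos d η hη N m₁).le _
    · exact le_rfl
  have hfb : ∀ m₁ : Fin d → ℤ,
      (if Λ / 2 ≤ dcbJ d η N m₁ then dcbJ d η N m₁ ^ (-t) else 0) ≤ b (dcbjfun d m₁) := by
    intro m₁
    split
    case isTrue hcond =>
      rw [hb]; dsimp only
      rw [if_pos (dcb_cond_upB d hd η hη N hN Λ m₁ hcond)]
      have hAjpos : (0:ℝ) < Real.sqrt η + 2 * Real.pi * (2:ℝ) ^ (dcbjfun d m₁) / N := by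
        positivity
      have hle : (Real.sqrt η + 2 * Real.pi * (2:ℝ) ^ (dcbjfun d m₁) / N) /
          (3 + 2 * Real.pi / Real.sqrt η) ≤ dcbJ d η N m₁ := by
        rw [div_le_iff₀ hcppos]
        have h := dcb_Aj_le_J d hd η hη N hN m₁
        linarith
      calc dcbJ d η N m₁ ^ (-t)
          ≤ ((Real.sqrt η + 2 * Real.pi * (2:ℝ) ^ (dcbjfun d m₁) / N) /
              (3 + 2 * Real.pi / Real.sqrt η)) ^ (-t) :=
            dcb_rpow_anti (by positivity) hle ht0.le
        _ = (Real.sqrt η + 2 * Real.pi * (2:ℝ) ^ (dcbjfun d m₁) / N) ^ (-t) *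
              (3 + 2 * Real.pi / Real.sqrt η) ^ t :=
            dcb_div_rpow_neg _ _ hAjpos.le hcppos.le t
        _ = (3 + 2 * Real.pi / Real.sqrt η) ^ t *
              (Real.sqrt η + 2 * Real.pi * (2:ℝ) ^ (dcbjfun d m₁) / N) ^ (-t) := by ring
    case isFalse hcond => exact hb0 _
  obtain ⟨M, hM⟩ := dcb_shell_master d _ b hf0 hb0 hfb F
  refine le_trans hM ?_
  -- a bound used in both cases: A_j ≥ 2π 2^j / N
  have hAtail : ∀ j : ℕ, (Real.sqrt η + 2 * Real.pi * (2:ℝ) ^ j / N) ^ (-t) ≤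
      (2 * Real.pi) ^ (-t) * (N:ℝ) ^ t * ((2:ℝ) ^ j) ^ (-t) := by
    intro j
    have h2j : (0:ℝ) < (2:ℝ) ^ j := by positivity
    have hA2 : (2 * Real.pi / N) * (2:ℝ) ^ j ≤
        Real.sqrt η + 2 * Real.pi * (2:ℝ) ^ j / N := by
      have e : (2 * Real.pi / (N:ℝ)) * (2:ℝ) ^ j = 2 * Real.pi * (2:ℝ) ^ j / N := by ring
      rw [e]
      linarith
    have h1 : (Real.sqrt η + 2 * Real.pi * (2:ℝ) ^ j / N) ^ (-t) ≤
        ((2 * Real.pi / N) * (2:ℝ) ^ j) ^ (-t) :=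
      dcb_rpow_anti (by positivity) hA2 ht0.le
    have h2 : ((2 * Real.pi / (N:ℝ)) * (2:ℝ) ^ j) ^ (-t) =
        (2 * Real.pi / (N:ℝ)) ^ (-t) * ((2:ℝ) ^ j) ^ (-t) :=
      Real.mul_rpow (by positivity) (by positivity)
    have h3 : (2 * Real.pi / (N:ℝ)) ^ (-t) = (2 * Real.pi) ^ (-t) * (N:ℝ) ^ t :=
      dcb_div_rpow_neg _ _ (by positivity) (by positivity) t
    rw [h2, h3] at h1
    exact h1
  by_cases hcase : Λ ≤ 8 * Real.sqrt d * Real.sqrt η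
  · -- small Λ : ignore the condition in b
    have hterm : ∀ j, ((8:ℝ) ^ d * (2:ℝ) ^ (j * d)) * b j ≤
        (8:ℝ) ^ d * (3 + 2 * Real.pi / Real.sqrt η) ^ t * Real.sqrt η ^ (-t) *
          (if (2:ℝ) ^ j ≤ (N:ℝ) then ((2:ℝ) ^ j) ^ ((d:ℝ)) else 0)
        + (8:ℝ) ^ d * (3 + 2 * Real.pi / Real.sqrt η) ^ t *
            ((2 * Real.pi) ^ (-t) * (N:ℝ) ^ t) *
          (if (N:ℝ) ≤ (2:ℝ) ^ j then ((2:ℝ) ^ j) ^ ((d:ℝ) - t) else 0) := by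
      intro j
      have h2j : (0:ℝ) < (2:ℝ) ^ j := by positivity
      have hAjpos : (0:ℝ) < Real.sqrt η + 2 * Real.pi * (2:ℝ) ^ j / N := by positivity
      have hbval : b j ≤ (3 + 2 * Real.pi / Real.sqrt η) ^ t *
          (Real.sqrt η + 2 * Real.pi * (2:ℝ) ^ j / N) ^ (-t) := by
        rw [hb]; dsimp only; split
        · exact le_rfl
        · positivity
      have hc1 : (0:ℝ) ≤ (8:ℝ) ^ d * (2:ℝ) ^ (j * d) := by positivity
      by_cases hsmall : (2:ℝ) ^ j ≤ (N:ℝ)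
      · rw [if_pos hsmall]
        have hb1 : (Real.sqrt η + 2 * Real.pi * (2:ℝ) ^ j / N) ^ (-t) ≤ Real.sqrt η ^ (-t) :=
          dcb_rpow_anti hsepos (le_add_of_nonneg_right (by positivity)) ht0.le
        have hmain : ((8:ℝ) ^ d * (2:ℝ) ^ (j * d)) * b j ≤
            (8:ℝ) ^ d * (3 + 2 * Real.pi / Real.sqrt η) ^ t * Real.sqrt η ^ (-t) *
              ((2:ℝ) ^ j) ^ ((d:ℝ)) := by
          rw [dcb_pow_mul_rpow]
          calc ((8:ℝ) ^ d * ((2:ℝ)^j) ^ ((d:ℝ))) * b j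
              ≤ ((8:ℝ) ^ d * ((2:ℝ)^j) ^ ((d:ℝ))) *
                ((3 + 2 * Real.pi / Real.sqrt η) ^ t *
                  (Real.sqrt η + 2 * Real.pi * (2:ℝ) ^ j / N) ^ (-t)) :=
                mul_le_mul_of_nonneg_left hbval (by positivity)
            _ = ((8:ℝ) ^ d * ((2:ℝ)^j) ^ ((d:ℝ)) * (3 + 2 * Real.pi / Real.sqrt η) ^ t) *
                (Real.sqrt η + 2 * Real.pi * (2:ℝ) ^ j / N) ^ (-t) := by ring
            _ ≤ ((8:ℝ) ^ d * ((2:ℝ)^j) ^ ((d:ℝ)) * (3 + 2 * Real.pi / Real.sqrt η) ^ t) *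
                Real.sqrt η ^ (-t) := mul_le_mul_of_nonneg_left hb1 (by positivity)
            _ = (8:ℝ) ^ d * (3 + 2 * Real.pi / Real.sqrt η) ^ t * Real.sqrt η ^ (-t) *
                ((2:ℝ) ^ j) ^ ((d:ℝ)) := by ring
        have hsecond : (0:ℝ) ≤ (8:ℝ) ^ d * (3 + 2 * Real.pi / Real.sqrt η) ^ t *
            ((2 * Real.pi) ^ (-t) * (N:ℝ) ^ t) *
            (if (N:ℝ) ≤ (2:ℝ) ^ j then ((2:ℝ) ^ j) ^ ((d:ℝ) - t) else 0) := by
          apply mul_nonneg (by positivity)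
          split
          · positivity
          · exact le_rfl
        linarith
      · have hge : (N:ℝ) ≤ (2:ℝ) ^ j := (lt_of_not_ge hsmall).le
        rw [if_neg hsmall, if_pos hge, mul_zero, zero_add]
        have hsplit : ((2:ℝ) ^ j) ^ ((d:ℝ) - t) = ((2:ℝ)^j) ^ ((d:ℝ)) * ((2:ℝ)^j) ^ (-t) := by
          rw [show (d:ℝ) - t = (d:ℝ) + (-t) by ring, Real.rpow_add h2j]
        rw [dcb_pow_mul_rpow, hsplit]
        calc ((8:ℝ) ^ d * ((2:ℝ)^j) ^ ((d:ℝ))) * b j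
            ≤ ((8:ℝ) ^ d * ((2:ℝ)^j) ^ ((d:ℝ))) *
              ((3 + 2 * Real.pi / Real.sqrt η) ^ t *
                (Real.sqrt η + 2 * Real.pi * (2:ℝ) ^ j / N) ^ (-t)) :=
              mul_le_mul_of_nonneg_left hbval (by positivity)
          _ = ((8:ℝ) ^ d * ((2:ℝ)^j) ^ ((d:ℝ)) * (3 + 2 * Real.pi / Real.sqrt η) ^ t) *
              (Real.sqrt η + 2 * Real.pi * (2:ℝ) ^ j / N) ^ (-t) := by ring
          _ ≤ ((8:ℝ) ^ d * ((2:ℝ)^j) ^ ((d:ℝ)) * (3 + 2 * Real.pi / Real.sqrt η) ^ t) *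
              ((2 * Real.pi) ^ (-t) * (N:ℝ) ^ t * ((2:ℝ) ^ j) ^ (-t)) :=
              mul_le_mul_of_nonneg_left (hAtail j) (by positivity)
          _ = (8:ℝ) ^ d * (3 + 2 * Real.pi / Real.sqrt η) ^ t *
              ((2 * Real.pi) ^ (-t) * (N:ℝ) ^ t) *
              (((2:ℝ)^j) ^ ((d:ℝ)) * ((2:ℝ) ^ j) ^ (-t)) := by ring
    refine le_trans (Finset.sum_le_sum fun j (_ : j ∈ Finset.range M) => hterm j) ?_
    rw [Finset.sum_add_distrib, ← Finset.mul_sum, ← Finset.mul_sum]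
    have hgeo1 : ∑ j ∈ Finset.range M,
        (if (2:ℝ) ^ j ≤ (N:ℝ) then ((2:ℝ) ^ j) ^ ((d:ℝ)) else 0)
        ≤ κ1 * (N:ℝ) ^ ((d:ℝ)) :=
      dcb_geo_inc (d:ℝ) (N:ℝ) hd0 hNr M _ (fun j hj => hj)
    have hgeo2 : ∑ j ∈ Finset.range M,
        (if (N:ℝ) ≤ (2:ℝ) ^ j then ((2:ℝ) ^ j) ^ ((d:ℝ) - t) else 0)
        ≤ (N:ℝ) ^ ((d:ℝ) - t) / (1 - (2:ℝ) ^ ((d:ℝ) - t)) :=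
      dcb_geo_dec ((d:ℝ) - t) (N:ℝ) hdt hNpos M _ (fun j hj => hj)
    have hNsplit : (N:ℝ) ^ t * (N:ℝ) ^ ((d:ℝ) - t) = (N:ℝ) ^ ((d:ℝ)) := by
      rw [← Real.rpow_add hNpos]
      congr 1
      ring
    have hone : (1:ℝ) ≤ (8 * Real.sqrt d * Real.sqrt η) ^ (t - (d:ℝ)) * Λ ^ ((d:ℝ) - t) := by
      have hBpos : (0:ℝ) < 8 * Real.sqrt d * Real.sqrt η := by positivity
      have h1 : (8 * Real.sqrt d * Real.sqrt η) ^ ((d:ℝ) - t) ≤ Λ ^ ((d:ℝ) - t) :=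
        Real.rpow_le_rpow_of_nonpos hΛpos hcase hdt.le
      have h2 : (8 * Real.sqrt d * Real.sqrt η) ^ (t - (d:ℝ)) *
          (8 * Real.sqrt d * Real.sqrt η) ^ ((d:ℝ) - t) = 1 := by
        rw [← Real.rpow_add hBpos]
        norm_num
      have h3 : (0:ℝ) < (8 * Real.sqrt d * Real.sqrt η) ^ (t - (d:ℝ)) :=
        Real.rpow_pos_of_pos hBpos _
      nlinarith
    have hD1 : (0:ℝ) ≤ (8:ℝ) ^ d * (3 + 2 * Real.pi / Real.sqrt η) ^ t *
        Real.sqrt η ^ (-t) := by positivity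
    have hD2 : (0:ℝ) ≤ (8:ℝ) ^ d * (3 + 2 * Real.pi / Real.sqrt η) ^ t *
        ((2 * Real.pi) ^ (-t) * (N:ℝ) ^ t) := by positivity
    have h1 := mul_le_mul_of_nonneg_left hgeo1 hD1
    have h2 := mul_le_mul_of_nonneg_left hgeo2 hD2
    have hbase : (8:ℝ) ^ d * (3 + 2 * Real.pi / Real.sqrt η) ^ t * Real.sqrt η ^ (-t) *
          (κ1 * (N:ℝ) ^ ((d:ℝ)))
        + (8:ℝ) ^ d * (3 + 2 * Real.pi / Real.sqrt η) ^ t *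
          ((2 * Real.pi) ^ (-t) * (N:ℝ) ^ t) *
          ((N:ℝ) ^ ((d:ℝ) - t) / (1 - (2:ℝ) ^ ((d:ℝ) - t)))
        = (8:ℝ)^d * (3 + 2 * Real.pi / Real.sqrt η) ^ t *
          (Real.sqrt η ^ (-t) * κ1 + (2 * Real.pi) ^ (-t) * κ3) * (N:ℝ) ^ ((d:ℝ)) := by
      rw [hκ3, ← hNsplit]
      field_simp
    have hstep : (8:ℝ)^d * (3 + 2 * Real.pi / Real.sqrt η) ^ t *
        (Real.sqrt η ^ (-t) * κ1 + (2 * Real.pi) ^ (-t) * κ3) * (N:ℝ) ^ ((d:ℝ)) ≤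
        Csmall * (N:ℝ) ^ ((d:ℝ)) * Λ ^ ((d:ℝ) - t) := by
      have hbnn : (0:ℝ) ≤ (8:ℝ)^d * (3 + 2 * Real.pi / Real.sqrt η) ^ t *
          (Real.sqrt η ^ (-t) * κ1 + (2 * Real.pi) ^ (-t) * κ3) * (N:ℝ) ^ ((d:ℝ)) := by
        have : (0:ℝ) ≤ Real.sqrt η ^ (-t) * κ1 + (2 * Real.pi) ^ (-t) * κ3 := by
          have := hκ1pos; have := hκ3pos
          positivity
        positivity
      have := mul_le_mul_of_nonneg_left hone hbnn
      calc (8:ℝ)^d * (3 + 2 * Real.pi / Real.sqrt η) ^ t *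
          (Real.sqrt η ^ (-t) * κ1 + (2 * Real.pi) ^ (-t) * κ3) * (N:ℝ) ^ ((d:ℝ))
          = (8:ℝ)^d * (3 + 2 * Real.pi / Real.sqrt η) ^ t *
            (Real.sqrt η ^ (-t) * κ1 + (2 * Real.pi) ^ (-t) * κ3) * (N:ℝ) ^ ((d:ℝ)) * 1 := by
            ring
        _ ≤ (8:ℝ)^d * (3 + 2 * Real.pi / Real.sqrt η) ^ t *
            (Real.sqrt η ^ (-t) * κ1 + (2 * Real.pi) ^ (-t) * κ3) * (N:ℝ) ^ ((d:ℝ)) *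
            ((8 * Real.sqrt d * Real.sqrt η) ^ (t - (d:ℝ)) * Λ ^ ((d:ℝ) - t)) := this
        _ = Csmall * (N:ℝ) ^ ((d:ℝ)) * Λ ^ ((d:ℝ) - t) := by
            rw [hCsmall]; ring
    have hlast : Csmall * (N:ℝ) ^ ((d:ℝ)) * Λ ^ ((d:ℝ) - t) ≤
        max 1 (Csmall + Cbig) * (N:ℝ) ^ ((d:ℝ)) * Λ ^ ((d:ℝ) - t) := by
      have hmx : Csmall ≤ max 1 (Csmall + Cbig) :=
        le_trans (by linarith) (le_max_right 1 (Csmall + Cbig))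
      exact mul_le_mul_of_nonneg_right
        (mul_le_mul_of_nonneg_right hmx hNd.le) hLd.le
    linarith
  · -- large Λ
    push_neg at hcase
    have hQpos : (0:ℝ) < (N:ℝ) * Λ / (16 * Real.pi * Real.sqrt d) := by positivity
    have hterm : ∀ j, ((8:ℝ) ^ d * (2:ℝ) ^ (j * d)) * b j ≤
        (8:ℝ) ^ d * (3 + 2 * Real.pi / Real.sqrt η) ^ t *
            ((2 * Real.pi) ^ (-t) * (N:ℝ) ^ t) *
          (if (N:ℝ) * Λ / (16 * Real.pi * Real.sqrt d) ≤ (2:ℝ) ^ j then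
            ((2:ℝ) ^ j) ^ ((d:ℝ) - t) else 0) := by
      intro j
      have h2j : (0:ℝ) < (2:ℝ) ^ j := by positivity
      have hAjpos : (0:ℝ) < Real.sqrt η + 2 * Real.pi * (2:ℝ) ^ j / N := by positivity
      rw [hb]; dsimp only
      split
      case isTrue hbc =>
        have hQle : (N:ℝ) * Λ / (16 * Real.pi * Real.sqrt d) ≤ (2:ℝ) ^ j := by
          have hsd0 : (0:ℝ) < Real.sqrt d := by linarith
          have e : 4 * Real.sqrt d * (Real.sqrt η + 2 * Real.pi * (2:ℝ) ^ j / N) * N =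
              4 * Real.sqrt d * Real.sqrt η * N +
                8 * Real.pi * Real.sqrt d * (2:ℝ) ^ j := by
            field_simp
            ring
          have h5 : Λ * N ≤ 4 * Real.sqrt d * Real.sqrt η * N +
              8 * Real.pi * Real.sqrt d * (2:ℝ) ^ j := by
            have := mul_le_mul_of_nonneg_right hbc hNpos.le
            rw [e] at this
            exact this
          have h6 : 4 * Real.sqrt d * Real.sqrt η * N ≤ Λ / 2 * N := by
            apply mul_le_mul_of_nonneg_right _ hNpos.le
            linarith
          rw [div_le_iff₀ (by positivity)]
          nlinarith
        rw [if_pos hQle]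
        have hsplit : ((2:ℝ) ^ j) ^ ((d:ℝ) - t) = ((2:ℝ)^j) ^ ((d:ℝ)) * ((2:ℝ)^j) ^ (-t) := by
          rw [show (d:ℝ) - t = (d:ℝ) + (-t) by ring, Real.rpow_add h2j]
        rw [dcb_pow_mul_rpow, hsplit]
        calc ((8:ℝ) ^ d * ((2:ℝ)^j) ^ ((d:ℝ))) *
            ((3 + 2 * Real.pi / Real.sqrt η) ^ t *
              (Real.sqrt η + 2 * Real.pi * (2:ℝ) ^ j / N) ^ (-t))
            = ((8:ℝ) ^ d * ((2:ℝ)^j) ^ ((d:ℝ)) * (3 + 2 * Real.pi / Real.sqrt η) ^ t) *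
              (Real.sqrt η + 2 * Real.pi * (2:ℝ) ^ j / N) ^ (-t) := by ring
          _ ≤ ((8:ℝ) ^ d * ((2:ℝ)^j) ^ ((d:ℝ)) * (3 + 2 * Real.pi / Real.sqrt η) ^ t) *
              ((2 * Real.pi) ^ (-t) * (N:ℝ) ^ t * ((2:ℝ) ^ j) ^ (-t)) :=
              mul_le_mul_of_nonneg_left (hAtail j) (by positivity)
          _ = (8:ℝ) ^ d * (3 + 2 * Real.pi / Real.sqrt η) ^ t *
              ((2 * Real.pi) ^ (-t) * (N:ℝ) ^ t) *
              (((2:ℝ)^j) ^ ((d:ℝ)) * ((2:ℝ) ^ j) ^ (-t)) := by ring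
      case isFalse hbc =>
        rw [mul_zero]
        apply mul_nonneg (by positivity)
        split
        · positivity
        · exact le_rfl
    refine le_trans (Finset.sum_le_sum fun j (_ : j ∈ Finset.range M) => hterm j) ?_
    rw [← Finset.mul_sum]
    have hgeo : ∑ j ∈ Finset.range M,
        (if (N:ℝ) * Λ / (16 * Real.pi * Real.sqrt d) ≤ (2:ℝ) ^ j then
          ((2:ℝ) ^ j) ^ ((d:ℝ) - t) else 0)
        ≤ ((N:ℝ) * Λ / (16 * Real.pi * Real.sqrt d)) ^ ((d:ℝ) - t) /
            (1 - (2:ℝ) ^ ((d:ℝ) - t)) :=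
      dcb_geo_dec ((d:ℝ) - t) _ hdt hQpos M _ (fun j hj => hj)
    have hD2 : (0:ℝ) ≤ (8:ℝ) ^ d * (3 + 2 * Real.pi / Real.sqrt η) ^ t *
        ((2 * Real.pi) ^ (-t) * (N:ℝ) ^ t) := by positivity
    have h2 := mul_le_mul_of_nonneg_left hgeo hD2
    have hQfac : ((N:ℝ) * Λ / (16 * Real.pi * Real.sqrt d)) ^ ((d:ℝ) - t) =
        (N:ℝ) ^ ((d:ℝ) - t) * Λ ^ ((d:ℝ) - t) *
          (16 * Real.pi * Real.sqrt d) ^ (t - (d:ℝ)) := by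
      rw [show (d:ℝ) - t = -(t - (d:ℝ)) by ring]
      rw [dcb_div_rpow_neg _ _ (by positivity) (by positivity)]
      rw [show -(t - (d:ℝ)) = (d:ℝ) - t by ring]
      rw [Real.mul_rpow hNpos.le hΛpos.le]
    have hNsplit : (N:ℝ) ^ t * (N:ℝ) ^ ((d:ℝ) - t) = (N:ℝ) ^ ((d:ℝ)) := by
      rw [← Real.rpow_add hNpos]
      congr 1
      ring
    have hfin : (8:ℝ) ^ d * (3 + 2 * Real.pi / Real.sqrt η) ^ t *
        ((2 * Real.pi) ^ (-t) * (N:ℝ) ^ t) *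
        (((N:ℝ) * Λ / (16 * Real.pi * Real.sqrt d)) ^ ((d:ℝ) - t) /
          (1 - (2:ℝ) ^ ((d:ℝ) - t)))
        = Cbig * (N:ℝ) ^ ((d:ℝ)) * Λ ^ ((d:ℝ) - t) := by
      rw [hQfac, hCbig, hκ3, ← hNsplit]
      field_simp
    have hlast : Cbig * (N:ℝ) ^ ((d:ℝ)) * Λ ^ ((d:ℝ) - t) ≤
        max 1 (Csmall + Cbig) * (N:ℝ) ^ ((d:ℝ)) * Λ ^ ((d:ℝ) - t) := by
      have hmx : Cbig ≤ max 1 (Csmall + Cbig) :=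
        le_trans (by linarith) (le_max_right 1 (Csmall + Cbig))
      exact mul_le_mul_of_nonneg_right
        (mul_le_mul_of_nonneg_right hmx hNd.le) hLd.le
    linarith
lemma dcbS_sub (d : ℕ) (hd : 1 ≤ d) (N : ℕ) (m m₁ : Fin d → ℤ)
    (h : 4 * dcbS d N m₁ ≤ dcbS d N m) : dcbS d N m / 4 ≤ dcbS d N (m - m₁) := by
  have hS1 := dcbS_nonneg d N m₁
  have hSm := dcbS_nonneg d N m
  have hS2 := dcbS_nonneg d N (m - m₁)
  set u : EuclideanSpace ℝ (Fin d) := WithLp.toLp 2 (fun i => (m i : ℝ) / N) with hu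
  set v : EuclideanSpace ℝ (Fin d) := WithLp.toLp 2 (fun i => (m₁ i : ℝ) / N) with hv
  have hnu : ‖u‖ = Real.sqrt (dcbS d N m) := by
    rw [EuclideanSpace.norm_eq]
    congr 1
    rw [dcbS]
    apply Finset.sum_congr rfl
    intro i _
    rw [hu]
    simp [Real.norm_eq_abs, abs_div, div_pow, sq_abs, Nat.abs_cast]
  have hnv : ‖v‖ = Real.sqrt (dcbS d N m₁) := by
    rw [EuclideanSpace.norm_eq]
    congr 1
    rw [dcbS]
    apply Finset.sum_congr rfl
    intro i _
    rw [hv]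
    simp [Real.norm_eq_abs, abs_div, div_pow, sq_abs, Nat.abs_cast]
  have hnuv : ‖u - v‖ = Real.sqrt (dcbS d N (m - m₁)) := by
    rw [EuclideanSpace.norm_eq]
    congr 1
    rw [dcbS]
    apply Finset.sum_congr rfl
    intro i _
    have e : (u - v) i = ((m i : ℝ) - (m₁ i : ℝ)) / N := by
      rw [hu, hv]
      simp [sub_div]
    rw [e]
    have e2 : (((m - m₁) i : ℤ) : ℝ) = (m i : ℝ) - (m₁ i : ℝ) := by
      simp [Pi.sub_apply]
    rw [e2]
    simp [Real.norm_eq_abs, abs_div, div_pow, sq_abs, Nat.abs_cast]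
  have htri : ‖u‖ - ‖v‖ ≤ ‖u - v‖ := by
    have := norm_sub_norm_le u v
    linarith [abs_le.1 (abs_norm_sub_norm_le u v)]
  have hv_le : Real.sqrt (dcbS d N m₁) ≤ Real.sqrt (dcbS d N m) / 2 := by
    have h1 : dcbS d N m₁ ≤ (Real.sqrt (dcbS d N m) / 2) ^ 2 := by
      rw [div_pow, Real.sq_sqrt hSm]
      linarith
    calc Real.sqrt (dcbS d N m₁) ≤ Real.sqrt ((Real.sqrt (dcbS d N m) / 2) ^ 2) :=
        Real.sqrt_le_sqrt h1
      _ = Real.sqrt (dcbS d N m) / 2 := Real.sqrt_sq (by positivity)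
  have hkey : Real.sqrt (dcbS d N m) / 2 ≤ Real.sqrt (dcbS d N (m - m₁)) := by
    rw [← hnuv]
    rw [hnu, hnv] at htri
    linarith
  have h2 : (Real.sqrt (dcbS d N m) / 2) ^ 2 ≤ Real.sqrt (dcbS d N (m - m₁)) ^ 2 := by
    apply sq_le_sq' _ hkey
    have : (0:ℝ) ≤ Real.sqrt (dcbS d N m) / 2 := by positivity
    nlinarith [Real.sqrt_nonneg (dcbS d N (m - m₁))]
  rw [Real.sq_sqrt hS2, div_pow, Real.sq_sqrt hSm] at h2
  linarith

lemma dcbJ_half (d : ℕ) (η : ℝ) (hη : 0 < η) (N : ℕ) (m x : Fin d → ℤ)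
    (h : dcbS d N m / 4 ≤ dcbS d N x) : dcbJ d η N m / 2 ≤ dcbJ d η N x := by
  have h1 := dcbJ_sq d η hη N m
  have h2 := dcbJ_sq d η hη N x
  have hp1 := dcbJ_pos d η hη N m
  have hp2 := dcbJ_pos d η hη N x
  nlinarith [sq_nonneg Real.pi, Real.pi_pos]

lemma dcb_pointwise (d : ℕ) (hd : 1 ≤ d) (η : ℝ) (hη : 0 < η) (N : ℕ)
    (α β : ℝ) (hα : 0 < α) (hβ : 0 < β) (m m₁ : Fin d → ℤ) :
    dcbJ d η N m₁ ^ (-α) * dcbJ d η N (m - m₁) ^ (-β) ≤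
      (if dcbJ d η N m₁ ≤ dcbJ d η N m then dcbJ d η N m₁ ^ (-α) else 0) *
        ((2:ℝ) ^ β * dcbJ d η N m ^ (-β))
    + (if dcbJ d η N (m - m₁) ≤ dcbJ d η N m then dcbJ d η N (m - m₁) ^ (-β) else 0) *
        ((2:ℝ) ^ α * dcbJ d η N m ^ (-α))
    + (if dcbJ d η N m / 2 ≤ dcbJ d η N m₁ then dcbJ d η N m₁ ^ (-(α + β)) else 0)
    + (if dcbJ d η N m / 2 ≤ dcbJ d η N (m - m₁) then dcbJ d η N (m - m₁) ^ (-(α + β))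
        else 0) := by
  have hJm := dcbJ_pos d η hη N m
  have hJ1 := dcbJ_pos d η hη N m₁
  have hJ2 := dcbJ_pos d η hη N (m - m₁)
  have hT1nn : (0:ℝ) ≤ (if dcbJ d η N m₁ ≤ dcbJ d η N m then dcbJ d η N m₁ ^ (-α) else 0) *
      ((2:ℝ) ^ β * dcbJ d η N m ^ (-β)) := by
    apply mul_nonneg _ (by positivity)
    split
    · positivity
    · exact le_rfl
  have hT2nn : (0:ℝ) ≤ (if dcbJ d η N (m - m₁) ≤ dcbJ d η N m then
      dcbJ d η N (m - m₁) ^ (-β) else 0) * ((2:ℝ) ^ α * dcbJ d η N m ^ (-α)) := by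
    apply mul_nonneg _ (by positivity)
    split
    · positivity
    · exact le_rfl
  have hT3nn : (0:ℝ) ≤ (if dcbJ d η N m / 2 ≤ dcbJ d η N m₁ then
      dcbJ d η N m₁ ^ (-(α + β)) else 0) := by
    split
    · positivity
    · exact le_rfl
  have hT4nn : (0:ℝ) ≤ (if dcbJ d η N m / 2 ≤ dcbJ d η N (m - m₁) then
      dcbJ d η N (m - m₁) ^ (-(α + β)) else 0) := by
    split
    · positivity
    · exact le_rfl
  have hhalf : (dcbJ d η N m / 2) ^ (-β) = (2:ℝ) ^ β * dcbJ d η N m ^ (-β) := by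
    rw [dcb_div_rpow_neg _ _ hJm.le (by norm_num)]
    ring
  have hhalfα : (dcbJ d η N m / 2) ^ (-α) = (2:ℝ) ^ α * dcbJ d η N m ^ (-α) := by
    rw [dcb_div_rpow_neg _ _ hJm.le (by norm_num)]
    ring
  by_cases hc1 : 4 * dcbS d N m₁ ≤ dcbS d N m
  · -- m₁ small
    have hle1 : dcbJ d η N m₁ ≤ dcbJ d η N m := by
      apply dcbJ_mono
      have := dcbS_nonneg d N m₁
      linarith
    have hge2 : dcbJ d η N m / 2 ≤ dcbJ d η N (m - m₁) :=
      dcbJ_half d η hη N m _ (dcbS_sub d hd N m m₁ hc1)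
    have hmain : dcbJ d η N m₁ ^ (-α) * dcbJ d η N (m - m₁) ^ (-β) ≤
        (if dcbJ d η N m₁ ≤ dcbJ d η N m then dcbJ d η N m₁ ^ (-α) else 0) *
          ((2:ℝ) ^ β * dcbJ d η N m ^ (-β)) := by
      rw [if_pos hle1, ← hhalf]
      apply mul_le_mul_of_nonneg_left _ (by positivity)
      exact dcb_rpow_anti (by positivity) hge2 hβ.le
    linarith
  · by_cases hc2 : 4 * dcbS d N (m - m₁) ≤ dcbS d N m
    · -- m - m₁ small
      have hle1 : dcbJ d η N (m - m₁) ≤ dcbJ d η N m := by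
        apply dcbJ_mono
        have := dcbS_nonneg d N (m - m₁)
        linarith
      have hsub : m - (m - m₁) = m₁ := sub_sub_cancel m m₁
      have hge2 : dcbJ d η N m / 2 ≤ dcbJ d η N m₁ := by
        have := dcbJ_half d η hη N m _ (dcbS_sub d hd N m (m - m₁) hc2)
        rwa [hsub] at this
      have hmain : dcbJ d η N m₁ ^ (-α) * dcbJ d η N (m - m₁) ^ (-β) ≤
          (if dcbJ d η N (m - m₁) ≤ dcbJ d η N m then dcbJ d η N (m - m₁) ^ (-β) else 0) *
            ((2:ℝ) ^ α * dcbJ d η N m ^ (-α)) := by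
        rw [if_pos hle1, ← hhalfα]
        calc dcbJ d η N m₁ ^ (-α) * dcbJ d η N (m - m₁) ^ (-β)
            = dcbJ d η N (m - m₁) ^ (-β) * dcbJ d η N m₁ ^ (-α) := by ring
          _ ≤ dcbJ d η N (m - m₁) ^ (-β) * (dcbJ d η N m / 2) ^ (-α) := by
              apply mul_le_mul_of_nonneg_left _ (by positivity)
              exact dcb_rpow_anti (by positivity) hge2 hα.le
      linarith
    · -- both big
      push_neg at hc1 hc2
      have hge1 : dcbJ d η N m / 2 ≤ dcbJ d η N m₁ :=
        dcbJ_half d η hη N m _ (by linarith)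
      have hge2 : dcbJ d η N m / 2 ≤ dcbJ d η N (m - m₁) :=
        dcbJ_half d η hη N m _ (by linarith)
      by_cases hcmp : dcbJ d η N m₁ ≤ dcbJ d η N (m - m₁)
      · have hmain : dcbJ d η N m₁ ^ (-α) * dcbJ d η N (m - m₁) ^ (-β) ≤
            (if dcbJ d η N m / 2 ≤ dcbJ d η N m₁ then dcbJ d η N m₁ ^ (-(α + β)) else 0) := by
          rw [if_pos hge1]
          have h1 : dcbJ d η N (m - m₁) ^ (-β) ≤ dcbJ d η N m₁ ^ (-β) :=
            dcb_rpow_anti hJ1 hcmp hβ.le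
          have h2 : dcbJ d η N m₁ ^ (-α) * dcbJ d η N m₁ ^ (-β) =
              dcbJ d η N m₁ ^ (-(α + β)) := by
            rw [← Real.rpow_add hJ1]
            congr 1
            ring
          calc dcbJ d η N m₁ ^ (-α) * dcbJ d η N (m - m₁) ^ (-β)
              ≤ dcbJ d η N m₁ ^ (-α) * dcbJ d η N m₁ ^ (-β) :=
                mul_le_mul_of_nonneg_left h1 (by positivity)
            _ = dcbJ d η N m₁ ^ (-(α + β)) := h2
        linarith
      · push_neg at hcmp
        have hmain : dcbJ d η N m₁ ^ (-α) * dcbJ d η N (m - m₁) ^ (-β) ≤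
            (if dcbJ d η N m / 2 ≤ dcbJ d η N (m - m₁) then
              dcbJ d η N (m - m₁) ^ (-(α + β)) else 0) := by
          rw [if_pos hge2]
          have h1 : dcbJ d η N m₁ ^ (-α) ≤ dcbJ d η N (m - m₁) ^ (-α) :=
            dcb_rpow_anti hJ2 hcmp.le hα.le
          have h2 : dcbJ d η N (m - m₁) ^ (-α) * dcbJ d η N (m - m₁) ^ (-β) =
              dcbJ d η N (m - m₁) ^ (-(α + β)) := by
            rw [← Real.rpow_add hJ2]
            congr 1
            ring
          calc dcbJ d η N m₁ ^ (-α) * dcbJ d η N (m - m₁) ^ (-β)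
              ≤ dcbJ d η N (m - m₁) ^ (-α) * dcbJ d η N (m - m₁) ^ (-β) :=
                mul_le_mul_of_nonneg_right h1 (by positivity)
            _ = dcbJ d η N (m - m₁) ^ (-(α + β)) := h2
        linarith
lemma dcb_finset_bound (d : ℕ) (hd : 1 ≤ d) (η : ℝ) (hη : 0 < η) (α β : ℝ)
    (h1 : (d : ℝ) < α + β) (h2 : α < d) (h3 : β < d) :
    ∃ C : ℝ, 0 < C ∧ ∀ N : ℕ, 0 < N → ∀ m : Fin d → ℤ, ∀ F : Finset (Fin d → ℤ),
      ∑ m₁ ∈ F, dcbJ d η N m₁ ^ (-α) * dcbJ d η N (m - m₁) ^ (-β) ≤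
        C * (N:ℝ) ^ ((d:ℝ)) * dcbJ d η N m ^ ((d:ℝ) - α - β) := by
  classical
  have hα : 0 < α := by linarith
  have hβ : 0 < β := by linarith
  obtain ⟨CA, hCA, hA⟩ := dcb_engineA d hd η hη α hα h2
  obtain ⟨CB, hCB, hB⟩ := dcb_engineA d hd η hη β hβ h3
  obtain ⟨CC, hCC, hC⟩ := dcb_engineB d hd η hη (α + β) h1
  refine ⟨(2:ℝ) ^ β * CA + (2:ℝ) ^ α * CB + 2 * CC, by positivity, ?_⟩
  intro N hN m F
  have hJm : 0 < dcbJ d η N m := dcbJ_pos d η hη N m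
  have hΛ : Real.sqrt η ≤ dcbJ d η N m := dcb_sqrt_eta_le d η hη.le N m
  have hNd : (0:ℝ) < (N:ℝ) ^ ((d:ℝ)) :=
    Real.rpow_pos_of_pos (by exact_mod_cast hN) _
  have hX : (0:ℝ) < dcbJ d η N m ^ ((d:ℝ) - α - β) := Real.rpow_pos_of_pos hJm _
  have hpoint := fun m₁ => dcb_pointwise d hd η hη N α β hα hβ m m₁
  have step1 := Finset.sum_le_sum (fun m₁ (_ : m₁ ∈ F) => hpoint m₁)
  refine le_trans step1 ?_
  rw [Finset.sum_add_distrib, Finset.sum_add_distrib, Finset.sum_add_distrib,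
    ← Finset.sum_mul, ← Finset.sum_mul]
  -- injectivity of m₁ ↦ m - m₁ on F
  have hinj : ∀ x ∈ F, ∀ y ∈ F, m - x = m - y → x = y := by
    intro x _ y _ hxy
    have : m - (m - x) = m - (m - y) := by rw [hxy]
    rwa [sub_sub_cancel, sub_sub_cancel] at this
  -- piece 1
  have hp1 : (∑ m₁ ∈ F, if dcbJ d η N m₁ ≤ dcbJ d η N m then dcbJ d η N m₁ ^ (-α) else 0) *
      ((2:ℝ) ^ β * dcbJ d η N m ^ (-β)) ≤
      ((2:ℝ) ^ β * CA) * (N:ℝ) ^ ((d:ℝ)) * dcbJ d η N m ^ ((d:ℝ) - α - β) := by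
    have h := hA N hN (dcbJ d η N m) hΛ F
    have hcoef : (0:ℝ) ≤ (2:ℝ) ^ β * dcbJ d η N m ^ (-β) := by positivity
    have h' := mul_le_mul_of_nonneg_right h hcoef
    refine le_trans h' (le_of_eq ?_)
    have e : dcbJ d η N m ^ ((d:ℝ) - α) * dcbJ d η N m ^ (-β) =
        dcbJ d η N m ^ ((d:ℝ) - α - β) := by
      rw [← Real.rpow_add hJm]
      congr 1 <;> ring
    calc CA * (N:ℝ) ^ ((d:ℝ)) * dcbJ d η N m ^ ((d:ℝ) - α) *
          ((2:ℝ) ^ β * dcbJ d η N m ^ (-β))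
        = ((2:ℝ) ^ β * CA) * (N:ℝ) ^ ((d:ℝ)) *
            (dcbJ d η N m ^ ((d:ℝ) - α) * dcbJ d η N m ^ (-β)) := by ring
      _ = ((2:ℝ) ^ β * CA) * (N:ℝ) ^ ((d:ℝ)) * dcbJ d η N m ^ ((d:ℝ) - α - β) := by rw [e]
  -- piece 2 (change of variables)
  have himg2 : (∑ m₁ ∈ F, if dcbJ d η N (m - m₁) ≤ dcbJ d η N m then
      dcbJ d η N (m - m₁) ^ (-β) else 0) =
      ∑ x ∈ F.image (fun m₁ => m - m₁),
        (if dcbJ d η N x ≤ dcbJ d η N m then dcbJ d η N x ^ (-β) else 0) :=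
    (Finset.sum_image (f := fun x => if dcbJ d η N x ≤ dcbJ d η N m then
      dcbJ d η N x ^ (-β) else 0) hinj).symm
  have hp2 : (∑ m₁ ∈ F, if dcbJ d η N (m - m₁) ≤ dcbJ d η N m then
      dcbJ d η N (m - m₁) ^ (-β) else 0) *
      ((2:ℝ) ^ α * dcbJ d η N m ^ (-α)) ≤
      ((2:ℝ) ^ α * CB) * (N:ℝ) ^ ((d:ℝ)) * dcbJ d η N m ^ ((d:ℝ) - α - β) := by
    rw [himg2]
    have h := hB N hN (dcbJ d η N m) hΛ (F.image (fun m₁ => m - m₁))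
    have hcoef : (0:ℝ) ≤ (2:ℝ) ^ α * dcbJ d η N m ^ (-α) := by positivity
    have h' := mul_le_mul_of_nonneg_right h hcoef
    refine le_trans h' (le_of_eq ?_)
    have e : dcbJ d η N m ^ ((d:ℝ) - β) * dcbJ d η N m ^ (-α) =
        dcbJ d η N m ^ ((d:ℝ) - α - β) := by
      rw [← Real.rpow_add hJm]
      congr 1 <;> ring
    calc CB * (N:ℝ) ^ ((d:ℝ)) * dcbJ d η N m ^ ((d:ℝ) - β) *
          ((2:ℝ) ^ α * dcbJ d η N m ^ (-α))
        = ((2:ℝ) ^ α * CB) * (N:ℝ) ^ ((d:ℝ)) *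
            (dcbJ d η N m ^ ((d:ℝ) - β) * dcbJ d η N m ^ (-α)) := by ring
      _ = ((2:ℝ) ^ α * CB) * (N:ℝ) ^ ((d:ℝ)) * dcbJ d η N m ^ ((d:ℝ) - α - β) := by rw [e]
  -- piece 3
  have hexpC : dcbJ d η N m ^ ((d:ℝ) - (α + β)) = dcbJ d η N m ^ ((d:ℝ) - α - β) := by
    congr 1
    ring
  have hp3 : (∑ m₁ ∈ F, if dcbJ d η N m / 2 ≤ dcbJ d η N m₁ then
      dcbJ d η N m₁ ^ (-(α + β)) else 0) ≤
      CC * (N:ℝ) ^ ((d:ℝ)) * dcbJ d η N m ^ ((d:ℝ) - α - β) := by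
    have h := hC N hN (dcbJ d η N m) hΛ F
    rwa [hexpC] at h
  -- piece 4
  have himg4 : (∑ m₁ ∈ F, if dcbJ d η N m / 2 ≤ dcbJ d η N (m - m₁) then
      dcbJ d η N (m - m₁) ^ (-(α + β)) else 0) =
      ∑ x ∈ F.image (fun m₁ => m - m₁),
        (if dcbJ d η N m / 2 ≤ dcbJ d η N x then dcbJ d η N x ^ (-(α + β)) else 0) :=
    (Finset.sum_image (f := fun x => if dcbJ d η N m / 2 ≤ dcbJ d η N x then
      dcbJ d η N x ^ (-(α + β)) else 0) hinj).symm
  have hp4 : (∑ m₁ ∈ F, if dcbJ d η N m / 2 ≤ dcbJ d η N (m - m₁) then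
      dcbJ d η N (m - m₁) ^ (-(α + β)) else 0) ≤
      CC * (N:ℝ) ^ ((d:ℝ)) * dcbJ d η N m ^ ((d:ℝ) - α - β) := by
    rw [himg4]
    have h := hC N hN (dcbJ d η N m) hΛ (F.image (fun m₁ => m - m₁))
    rwa [hexpC] at h
  have := add_le_add (add_le_add (add_le_add hp1 hp2) hp3) hp4
  refine le_trans this (le_of_eq ?_)
  ring

/-- **Bound on discrete convolutions.** Let `d ≥ 1`, `η > 0` and `α, β ∈ ℝ` with
`α + β > d`, `α < d`, `β < d`. Then there is `C = C(d, α, β) > 0`, independent of `N`,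
such that uniformly over `n = m/N ∈ (N⁻¹ℤ)^d`,
`(1/N^d) Σ_{n₁+n₂=n} ⟨n₁⟩^{−α} ⟨n₂⟩^{−β} ≤ C ⟨n⟩^{−(α+β−d)}`,
where `⟨x⟩ = sqrt(η + 4π²|x|²)`. -/
theorem discrete_convolution_bound (d : ℕ) (hd : 1 ≤ d) (η : ℝ) (hη : 0 < η)
    (α β : ℝ) (h1 : (d : ℝ) < α + β) (h2 : α < d) (h3 : β < d) :
    ∃ C : ℝ, 0 < C ∧ ∀ (N : ℕ), 0 < N → ∀ m : Fin d → ℤ,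
      (1 / (N : ℝ) ^ d) *
          ∑' m₁ : Fin d → ℤ,
            (Real.sqrt (η + 4 * Real.pi ^ 2 * ∑ i, ((m₁ i : ℝ) / N) ^ 2)) ^ (-α) *
            (Real.sqrt (η + 4 * Real.pi ^ 2 * ∑ i, (((m i - m₁ i : ℤ) : ℝ) / N) ^ 2)) ^ (-β)
        ≤ C * (Real.sqrt (η + 4 * Real.pi ^ 2 * ∑ i, ((m i : ℝ) / N) ^ 2)) ^ (-(α + β - d)) := by
  obtain ⟨C, hC, hbound⟩ := dcb_finset_bound d hd η hη α β h1 h2 h3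
  refine ⟨C, hC, ?_⟩
  intro N hN m
  have hbody : ∀ m₁ : Fin d → ℤ,
      (Real.sqrt (η + 4 * Real.pi ^ 2 * ∑ i, ((m₁ i : ℝ) / N) ^ 2)) ^ (-α) *
      (Real.sqrt (η + 4 * Real.pi ^ 2 * ∑ i, (((m i - m₁ i : ℤ) : ℝ) / N) ^ 2)) ^ (-β)
      = dcbJ d η N m₁ ^ (-α) * dcbJ d η N (m - m₁) ^ (-β) := fun _ => rfl
  rw [tsum_congr hbody]
  have hJeq : Real.sqrt (η + 4 * Real.pi ^ 2 * ∑ i, ((m i : ℝ) / N) ^ 2) = dcbJ d η N m :=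
    rfl
  rw [hJeq]
  have hJm : 0 < dcbJ d η N m := dcbJ_pos d η hη N m
  have htf0 : ∀ m₁ : Fin d → ℤ, 0 ≤ dcbJ d η N m₁ ^ (-α) * dcbJ d η N (m - m₁) ^ (-β) := by
    intro m₁
    have := dcbJ_pos d η hη N m₁
    have := dcbJ_pos d η hη N (m - m₁)
    positivity
  have hfin := hbound N hN m
  set B : ℝ := C * (N:ℝ) ^ ((d:ℝ)) * dcbJ d η N m ^ ((d:ℝ) - α - β) with hB
  have hNd : (0:ℝ) < (N:ℝ) ^ ((d:ℝ)) :=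
    Real.rpow_pos_of_pos (by exact_mod_cast hN) _
  have hX : (0:ℝ) < dcbJ d η N m ^ ((d:ℝ) - α - β) := Real.rpow_pos_of_pos hJm _
  have hBnn : 0 ≤ B := by
    rw [hB]
    positivity
  have hgle : (∑' m₁ : Fin d → ℤ,
      ENNReal.ofReal (dcbJ d η N m₁ ^ (-α) * dcbJ d η N (m - m₁) ^ (-β))) ≤
      ENNReal.ofReal B := by
    rw [ENNReal.tsum_eq_iSup_sum]
    apply iSup_le
    intro F
    rw [← ENNReal.ofReal_sum_of_nonneg (fun i _ => htf0 i)]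
    exact ENNReal.ofReal_le_ofReal (hfin F)
  have hgne : ∀ m₁ : Fin d → ℤ,
      ENNReal.ofReal (dcbJ d η N m₁ ^ (-α) * dcbJ d η N (m - m₁) ^ (-β)) ≠ ⊤ :=
    fun _ => ENNReal.ofReal_ne_top
  have htsum : ∑' m₁ : Fin d → ℤ, dcbJ d η N m₁ ^ (-α) * dcbJ d η N (m - m₁) ^ (-β) =
      (∑' m₁ : Fin d → ℤ,
        ENNReal.ofReal (dcbJ d η N m₁ ^ (-α) * dcbJ d η N (m - m₁) ^ (-β))).toReal := by
    rw [ENNReal.tsum_toReal_eq hgne]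
    exact tsum_congr fun m₁ => (ENNReal.toReal_ofReal (htf0 m₁)).symm
  have hle : ∑' m₁ : Fin d → ℤ, dcbJ d η N m₁ ^ (-α) * dcbJ d η N (m - m₁) ^ (-β) ≤ B := by
    rw [htsum]
    calc (∑' m₁ : Fin d → ℤ,
          ENNReal.ofReal (dcbJ d η N m₁ ^ (-α) * dcbJ d η N (m - m₁) ^ (-β))).toReal
        ≤ (ENNReal.ofReal B).toReal :=
          ENNReal.toReal_mono ENNReal.ofReal_ne_top hgle
      _ = B := ENNReal.toReal_ofReal hBnn
  have hNpow : (N:ℝ) ^ ((d:ℝ)) = (N:ℝ) ^ d := Real.rpow_natCast N d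
  have hNdp : (0:ℝ) < (N:ℝ) ^ d := by
    have : (0:ℝ) < (N:ℝ) := by exact_mod_cast hN
    positivity
  have hexp : dcbJ d η N m ^ (-(α + β - (d:ℝ))) = dcbJ d η N m ^ ((d:ℝ) - α - β) := by
    congr 1
    ring
  rw [hexp]
  calc (1 / (N:ℝ) ^ d) *
        ∑' m₁ : Fin d → ℤ, dcbJ d η N m₁ ^ (-α) * dcbJ d η N (m - m₁) ^ (-β)
      ≤ (1 / (N:ℝ) ^ d) * B := by
        apply mul_le_mul_of_nonneg_left hle (by positivity)
    _ = C * dcbJ d η N m ^ ((d:ℝ) - α - β) := by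
        rw [hB, hNpow]
        field_simp
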